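/- arXiv:1512.01143 — 2 statements merged into one kernel-verified Lean document; each statement's English description precedes it below -/
import Mathlib

section
/- Let (X,ℬ,μ,T) be a measure-preserving system with c_S^n = 2^{-n}. Then sup_α Asc_μ(X,α,T) = h_μ(X,T), where the supremum is over all finite measurable partitions α and h_μ denotes Kolmogorov–Sinai entropy. Consequently sup_α Int_μ(X,α,T) = h_μ(X,T), where Int_μ(X,α,T) = 2·Asc_μ(X,α,T) − h_μ(X,α,T). -/
open MeasureTheory

/-- Shannon entropy of the finite partition of `X` given by the fibers of `β`. -/
noncomputable def partEnt {X κ : Type*} [MeasurableSpace X] [Fintype κ]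
    (μ : Measure X) (β : X → κ) : ℝ :=
  ∑ c : κ, Real.negMulLog ((μ (β ⁻¹' {c})).toReal)

/-- The entropy `H_μ(α_S)` of the partition `α_S = ⋁_{i ∈ S} T^{-i} α`. -/
noncomputable def HS {X ι : Type*} [MeasurableSpace X] [Fintype ι]
    (μ : Measure X) (T : X → X) (α : X → ι) (S : Finset ℕ) : ℝ :=
  partEnt μ (fun x => fun i : {i // i ∈ S} => α (T^[(i : ℕ)] x))

/-- `Asc_μ(X,α,T)` with `c_S^n = 2^{-n}` (the limit equals the infimum by
subadditivity). -/
noncomputable def ascMu {X ι : Type*} [MeasurableSpace X] [Fintype ι]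
    (μ : Measure X) (T : X → X) (α : X → ι) : ℝ :=
  ⨅ n : ℕ+, (2 ^ (n : ℕ) : ℝ)⁻¹ *
    (∑ S ∈ (Finset.range (n : ℕ)).powerset, HS μ T α S) / (n : ℕ)

/-- The Kolmogorov–Sinai entropy of `T` relative to `α`:
`h_μ(X,α,T) = lim_n H_μ(α_{n^*})/n = inf_n H_μ(α_{n^*})/n`. -/
noncomputable def entMu {X ι : Type*} [MeasurableSpace X] [Fintype ι]
    (μ : Measure X) (T : X → X) (α : X → ι) : ℝ :=
  ⨅ n : ℕ+, HS μ T α (Finset.range (n : ℕ)) / (n : ℕ)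


set_option linter.unusedSectionVars false
set_option maxHeartbeats 1000000

section PartEnt
variable {X κ κ' : Type*} [MeasurableSpace X] [Fintype κ] [Fintype κ']
  (μ : Measure X) [IsProbabilityMeasure μ]

lemma partEnt_nonneg (f : X → κ) : 0 ≤ partEnt μ f := by
  refine Finset.sum_nonneg fun c _ => Real.negMulLog_nonneg ENNReal.toReal_nonneg ?_
  exact ENNReal.toReal_le_of_le_ofReal zero_le_one (by simpa using prob_le_one)

/-- fibers are measurable -/
def Fib {X κ : Type*} [MeasurableSpace X] (f : X → κ) : Prop :=
  ∀ c : κ, MeasurableSet (f ⁻¹' {c})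

lemma pdisj (f : X → κ) (s : Finset κ) :
    Set.Pairwise ↑s (Function.onFun Disjoint fun c => f ⁻¹' {c}) := by
  intro a _ b _ hab
  simp only [Function.onFun, Set.disjoint_left]
  intro x hx hx'
  exact hab (by simp only [Set.mem_preimage, Set.mem_singleton_iff] at hx hx'; rw [← hx, ← hx'])

lemma fib_sum {f : X → κ} (hf : Fib f) :
    ∑ c : κ, (μ (f ⁻¹' {c})).toReal = 1 := by
  classical
  have h : ∑ c : κ, μ (f ⁻¹' {c}) = μ Set.univ := by
    rw [← measure_biUnion_finset (pdisj f Finset.univ) (fun c _ => hf c)]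
    congr 1
    ext x; simp
  have := congrArg ENNReal.toReal h
  rwa [measure_univ, ENNReal.toReal_sum (fun c _ => measure_ne_top μ _), ENNReal.toReal_one] at this

lemma fib_comp_measure [DecidableEq κ'] {f : X → κ} (hf : Fib f) (σ : κ → κ') (c' : κ') :
    (μ ((σ ∘ f) ⁻¹' {c'})).toReal
      = ∑ c ∈ Finset.univ.filter (fun c => σ c = c'), (μ (f ⁻¹' {c})).toReal := by
  have h : ((σ ∘ f) ⁻¹' {c'}) = ⋃ c ∈ Finset.univ.filter (fun c => σ c = c'), f ⁻¹' {c} := by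
    ext x; simp [Set.mem_preimage, eq_comm]
  rw [h, measure_biUnion_finset (pdisj f _) (fun c _ => hf c),
    ENNReal.toReal_sum (fun c _ => measure_ne_top μ _)]

lemma negMulLog_add_le' {a b : ℝ} (ha : 0 ≤ a) (hb : 0 ≤ b) :
    Real.negMulLog (a + b) ≤ Real.negMulLog a + Real.negMulLog b := by
  rcases eq_or_lt_of_le ha with h | h
  · simp [← h]
  rcases eq_or_lt_of_le hb with h' | h'
  · simp [← h']
  have h1 : Real.log a ≤ Real.log (a + b) := Real.log_le_log h (by linarith)
  have h2 : Real.log b ≤ Real.log (a + b) := Real.log_le_log h' (by linarith)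
  simp only [Real.negMulLog, neg_mul]
  nlinarith

lemma negMulLog_sum_le' {ι : Type*} (s : Finset ι) (f : ι → ℝ) (hf : ∀ i ∈ s, 0 ≤ f i) :
    Real.negMulLog (∑ i ∈ s, f i) ≤ ∑ i ∈ s, Real.negMulLog (f i) := by
  induction s using Finset.cons_induction with
  | empty => simp
  | cons a s ha ih =>
    rw [Finset.sum_cons, Finset.sum_cons]
    calc Real.negMulLog (f a + ∑ i ∈ s, f i)
        ≤ Real.negMulLog (f a) + Real.negMulLog (∑ i ∈ s, f i) :=
          negMulLog_add_le' (hf a (Finset.mem_cons_self a s))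
            (Finset.sum_nonneg fun i hi => hf i (Finset.mem_cons_of_mem hi))
      _ ≤ _ := by
          gcongr
          exact ih fun i hi => hf i (Finset.mem_cons_of_mem hi)

lemma partEnt_comp_le {f : X → κ} (hf : Fib f) (σ : κ → κ') :
    partEnt μ (σ ∘ f) ≤ partEnt μ f := by
  classical
  calc partEnt μ (σ ∘ f)
      = ∑ c' : κ', Real.negMulLog (∑ c ∈ Finset.univ.filter (fun c => σ c = c'),
          (μ (f ⁻¹' {c})).toReal) := by
        unfold partEnt; exact Finset.sum_congr rfl fun c' _ => by rw [fib_comp_measure μ hf]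
    _ ≤ ∑ c' : κ', ∑ c ∈ Finset.univ.filter (fun c => σ c = c'),
          Real.negMulLog ((μ (f ⁻¹' {c})).toReal) :=
        Finset.sum_le_sum fun c' _ => negMulLog_sum_le' _ _ (fun c _ => ENNReal.toReal_nonneg)
    _ = partEnt μ f := Finset.sum_fiberwise _ _ _

lemma partEnt_eq_of {f : X → κ} {g : X → κ'} (hf : Fib f) (hg : Fib g)
    (σ : κ' → κ) (τ : κ → κ') (h1 : σ ∘ g = f) (h2 : τ ∘ f = g) :
    partEnt μ f = partEnt μ g :=
  le_antisymm (h1 ▸ partEnt_comp_le μ hg σ) (h2 ▸ partEnt_comp_le μ hf τ)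

end PartEnt


section J
variable {X κ κ' : Type*} [MeasurableSpace X] [Fintype κ] [Fintype κ']
  (μ : Measure X) [IsProbabilityMeasure μ]

lemma pdisj' {Y : Type*} (f : X → Y) (s : Finset Y) :
    Set.Pairwise ↑s (Function.onFun Disjoint fun c => f ⁻¹' {c}) := by
  intro a _ b _ hab
  simp only [Function.onFun, Set.disjoint_left]
  intro x hx hx'
  exact hab (by simp only [Set.mem_preimage, Set.mem_singleton_iff] at hx hx'; rw [← hx, ← hx'])

lemma fib_pair {f : X → κ} {g : X → κ'} (hf : Fib f) (hg : Fib g) :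
    Fib (fun x => (f x, g x)) := by
  intro ⟨c, d⟩
  have : (fun x => (f x, g x)) ⁻¹' {(c, d)} = f ⁻¹' {c} ∩ g ⁻¹' {d} := by
    ext x; simp [Prod.ext_iff]
  rw [this]; exact (hf c).inter (hg d)

lemma marginal_fst {f : X → κ} {g : X → κ'} (hf : Fib f) (hg : Fib g) (c : κ) :
    (μ (f ⁻¹' {c})).toReal
      = ∑ d : κ', (μ ((fun x => (f x, g x)) ⁻¹' {(c, d)})).toReal := by
  have h : f ⁻¹' {c} = ⋃ d ∈ Finset.univ, ((fun x => (f x, g x)) ⁻¹' {(c, d)}) := by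
    ext x; simp [Prod.ext_iff]
  have hd : Set.Pairwise (↑(Finset.univ : Finset κ'))
      (Function.onFun Disjoint fun d => (fun x => (f x, g x)) ⁻¹' {(c, d)}) := by
    intro a _ b _ hab
    simp only [Function.onFun, Set.disjoint_left]
    intro x hx hx'
    simp only [Set.mem_preimage, Set.mem_singleton_iff, Prod.ext_iff] at hx hx'
    exact hab (hx.2.symm.trans hx'.2)
  rw [h, measure_biUnion_finset hd (fun d _ => fib_pair hf hg (c, d)),
    ENNReal.toReal_sum (fun d _ => measure_ne_top μ _)]

lemma marginal_snd {f : X → κ} {g : X → κ'} (hf : Fib f) (hg : Fib g) (d : κ') :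
    (μ (g ⁻¹' {d})).toReal
      = ∑ c : κ, (μ ((fun x => (f x, g x)) ⁻¹' {(c, d)})).toReal := by
  have h : g ⁻¹' {d} = ⋃ c ∈ Finset.univ, ((fun x => (f x, g x)) ⁻¹' {(c, d)}) := by
    ext x; simp [Prod.ext_iff]
  have hd : Set.Pairwise (↑(Finset.univ : Finset κ))
      (Function.onFun Disjoint fun c => (fun x => (f x, g x)) ⁻¹' {(c, d)}) := by
    intro a _ b _ hab
    simp only [Function.onFun, Set.disjoint_left]
    intro x hx hx'
    simp only [Set.mem_preimage, Set.mem_singleton_iff, Prod.ext_iff] at hx hx'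
    exact hab (hx.1.symm.trans hx'.1)
  rw [h, measure_biUnion_finset hd (fun c _ => fib_pair hf hg (c, d)),
    ENNReal.toReal_sum (fun c _ => measure_ne_top μ _)]

lemma fib_sum' {Y : Type*} [Fintype Y] {f : X → Y} (hf : Fib f) :
    ∑ c : Y, (μ (f ⁻¹' {c})).toReal = 1 := by
  have h : ∑ c : Y, μ (f ⁻¹' {c}) = μ Set.univ := by
    rw [← measure_biUnion_finset (pdisj' f Finset.univ) (fun c _ => hf c)]
    congr 1
    ext x; simp
  have := congrArg ENNReal.toReal h
  rwa [measure_univ, ENNReal.toReal_sum (fun c _ => measure_ne_top μ _), ENNReal.toReal_one] at this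

lemma partEnt_pair_le {f : X → κ} {g : X → κ'} (hf : Fib f) (hg : Fib g) :
    partEnt μ (fun x => (f x, g x)) ≤ partEnt μ f + partEnt μ g := by
  set p : κ → κ' → ℝ := fun c d => (μ ((fun x => (f x, g x)) ⁻¹' {(c, d)})).toReal with hp
  set P : κ → ℝ := fun c => (μ (f ⁻¹' {c})).toReal with hP
  set Q : κ' → ℝ := fun d => (μ (g ⁻¹' {d})).toReal with hQ
  have hp0 : ∀ c d, 0 ≤ p c d := fun c d => ENNReal.toReal_nonneg
  have hP0 : ∀ c, 0 ≤ P c := fun c => ENNReal.toReal_nonneg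
  have hPm : ∀ c, P c = ∑ d, p c d := fun c => marginal_fst μ hf hg c
  have hQm : ∀ d, Q d = ∑ c, p c d := fun d => marginal_snd μ hf hg d
  have htot : ∑ c, P c = 1 := fib_sum' μ hf
  have hpair : partEnt μ (fun x => (f x, g x)) = ∑ c, ∑ d, Real.negMulLog (p c d) := by
    unfold partEnt
    rw [Fintype.sum_prod_type]
  have step1 : ∀ c, ∑ d, Real.negMulLog (p c d)
      = Real.negMulLog (P c) + P c * ∑ d, Real.negMulLog (p c d / P c) := by
    intro c
    rcases eq_or_lt_of_le (hP0 c) with h0 | h0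
    · have hz : ∀ d, p c d = 0 := by
        intro d
        have h1 : ∑ d, p c d = 0 := by rw [← hPm c, ← h0]
        exact le_antisymm (h1 ▸ Finset.single_le_sum (fun d _ => hp0 c d) (Finset.mem_univ d))
          (hp0 c d)
      simp [hz, ← h0]
    · have hne : P c ≠ 0 := ne_of_gt h0
      have : ∀ d, Real.negMulLog (p c d)
          = (p c d / P c) * Real.negMulLog (P c) + P c * Real.negMulLog (p c d / P c) := by
        intro d
        conv_lhs => rw [show p c d = P c * (p c d / P c) by field_simp]
        rw [Real.negMulLog_mul]
      rw [Finset.sum_congr rfl (fun d _ => this d), Finset.sum_add_distrib,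
        ← Finset.sum_mul, ← Finset.mul_sum, ← Finset.sum_div, ← hPm c]
      field_simp
  have step2 : ∑ c, P c * ∑ d, Real.negMulLog (p c d / P c) ≤ partEnt μ g := by
    have swap : ∑ c, P c * ∑ d, Real.negMulLog (p c d / P c)
        = ∑ d : κ', ∑ c, P c * Real.negMulLog (p c d / P c) := by
      rw [Finset.sum_comm]
      exact Finset.sum_congr rfl fun c _ => Finset.mul_sum _ _ _
    rw [swap]
    unfold partEnt
    refine Finset.sum_le_sum fun d _ => ?_
    have jensen := Real.concaveOn_negMulLog.le_map_sum (t := Finset.univ)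
      (w := P) (p := fun c => p c d / P c) (fun c _ => hP0 c) htot
      (fun c _ => Set.mem_Ici.mpr (div_nonneg (hp0 c d) (hP0 c)))
    have hsum : ∑ c, P c • (p c d / P c) = Q d := by
      rw [hQm d]
      refine Finset.sum_congr rfl fun c _ => ?_
      rcases eq_or_ne (P c) 0 with h | h
      · have h1 : ∑ d, p c d = 0 := by rw [← hPm c, h]
        have : p c d = 0 := le_antisymm
          (h1 ▸ Finset.single_le_sum (fun d _ => hp0 c d) (Finset.mem_univ d)) (hp0 c d)
        simp [h, this]
      · simp [smul_eq_mul]; field_simp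
    calc ∑ c, P c * Real.negMulLog (p c d / P c)
        = ∑ c, P c • Real.negMulLog (p c d / P c) := by simp [smul_eq_mul]
      _ ≤ Real.negMulLog (∑ c, P c • (p c d / P c)) := jensen
      _ = Real.negMulLog (Q d) := by rw [hsum]
  calc partEnt μ (fun x => (f x, g x))
      = ∑ c, (Real.negMulLog (P c) + P c * ∑ d, Real.negMulLog (p c d / P c)) := by
        rw [hpair]; exact Finset.sum_congr rfl fun c _ => step1 c
    _ = partEnt μ f + ∑ c, P c * ∑ d, Real.negMulLog (p c d / P c) := by
        rw [Finset.sum_add_distrib]; rfl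
    _ ≤ partEnt μ f + partEnt μ g := by linarith [step2]

lemma partEnt_le_log {f : X → κ} (hf : Fib f) :
    partEnt μ f ≤ Real.log (Fintype.card κ) := by
  rcases isEmpty_or_nonempty κ with h | h
  · exfalso
    have := fib_sum' μ hf
    rw [Finset.univ_eq_empty, Finset.sum_empty] at this
    norm_num at this
  set M : ℝ := (Fintype.card κ : ℝ) with hM
  have hM0 : 0 < M := by positivity
  have jensen := Real.concaveOn_negMulLog.le_map_sum (t := Finset.univ)
    (w := fun _ : κ => M⁻¹) (p := fun c => (μ (f ⁻¹' {c})).toReal)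
    (fun c _ => by positivity)
    (by rw [Finset.sum_const, Finset.card_univ, nsmul_eq_mul, ← hM]; exact mul_inv_cancel₀ hM0.ne')
    (fun c _ => Set.mem_Ici.mpr ENNReal.toReal_nonneg)
  have hs : ∑ c : κ, M⁻¹ • (μ (f ⁻¹' {c})).toReal = M⁻¹ := by
    rw [← Finset.smul_sum, fib_sum' μ hf, smul_eq_mul, mul_one]
  rw [hs] at jensen
  have h2 : Real.negMulLog M⁻¹ = M⁻¹ * Real.log M := by
    rw [Real.negMulLog, Real.log_inv]; ring
  have h3 : ∑ c : κ, M⁻¹ • Real.negMulLog ((μ (f ⁻¹' {c})).toReal)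
      = M⁻¹ * partEnt μ f := by
    rw [← Finset.smul_sum]; rfl
  rw [h3, h2] at jensen
  calc partEnt μ f = M * (M⁻¹ * partEnt μ f) := by field_simp
    _ ≤ M * (M⁻¹ * Real.log M) := by
        have := mul_le_mul_of_nonneg_left jensen (le_of_lt hM0)
        linarith
    _ = Real.log M := by field_simp
end J


section HSL
variable {X ι : Type*} [MeasurableSpace X] [Fintype ι]
  (μ : Measure X) [IsProbabilityMeasure μ] (T : X → X)
  {α : X → ι}

lemma fib_tuple (hTm : Measurable T) (hα : Fib α) (S : Finset ℕ) :
    Fib (fun x => fun i : {i // i ∈ S} => α (T^[(i : ℕ)] x)) := by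
  intro c
  have h : (fun x => fun i : {i // i ∈ S} => α (T^[(i : ℕ)] x)) ⁻¹' {c}
      = ⋂ i : {i // i ∈ S}, T^[(i : ℕ)] ⁻¹' (α ⁻¹' {c i}) := by
    ext x
    simp only [Set.mem_preimage, Set.mem_singleton_iff, Set.mem_iInter, funext_iff]
  rw [h]
  exact MeasurableSet.iInter fun i => (hTm.iterate (i : ℕ)) (hα (c i))

lemma fib_comp_iterate (hTm : Measurable T) (hα : Fib α) (t : ℕ) :
    Fib (α ∘ T^[t]) := fun c => (hTm.iterate t) (hα c)

variable (hT : MeasurePreserving T μ μ) (hα : Fib α)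
include hT hα

omit hT hα in
lemma HS_nonneg (S : Finset ℕ) : 0 ≤ HS μ T α S := partEnt_nonneg μ _

lemma HS_mono {S S' : Finset ℕ} (h : S ⊆ S') : HS μ T α S ≤ HS μ T α S' := by
  have := partEnt_comp_le μ (fib_tuple T hT.measurable hα S')
    (fun u (i : {i // i ∈ S}) => u ⟨i.1, h i.2⟩)
  exact this

lemma HS_union_le (S S' : Finset ℕ) : HS μ T α (S ∪ S') ≤ HS μ T α S + HS μ T α S' := by
  classical
  set f : X → ({i // i ∈ S} → ι) := fun x => fun i => α (T^[(i : ℕ)] x) with hf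
  set g : X → ({i // i ∈ S'} → ι) := fun x => fun i => α (T^[(i : ℕ)] x) with hg
  have key : HS μ T α (S ∪ S') = partEnt μ (fun x => (f x, g x)) := by
    refine partEnt_eq_of μ (fib_tuple T hT.measurable hα (S ∪ S')) ?_
      (fun z => fun i : {i // i ∈ S ∪ S'} =>
        if h : i.1 ∈ S then z.1 ⟨i.1, h⟩ else z.2 ⟨i.1, by
          rcases Finset.mem_union.mp i.2 with h' | h'
          · exact absurd h' h
          · exact h'⟩)
      (fun w => (fun i : {i // i ∈ S} => w ⟨i.1, Finset.mem_union_left _ i.2⟩,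
                 fun i : {i // i ∈ S'} => w ⟨i.1, Finset.mem_union_right _ i.2⟩))
      ?_ rfl
    · intro ⟨c, d⟩
      have h : (fun x => (f x, g x)) ⁻¹' {(c, d)} = f ⁻¹' {c} ∩ g ⁻¹' {d} := by
        ext x; simp [Prod.ext_iff]
      rw [h]
      exact ((fib_tuple T hT.measurable hα S) c).inter ((fib_tuple T hT.measurable hα S') d)
    · funext x
      funext i
      by_cases h : i.1 ∈ S <;> simp [h, hf, hg]
  rw [key]
  exact partEnt_pair_le μ (fib_tuple T hT.measurable hα S) (fib_tuple T hT.measurable hα S')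

lemma partEnt_comp_iterate {κ : Type*} [Fintype κ] {g : X → κ} (hg : Fib g) (t : ℕ) :
    partEnt μ (g ∘ T^[t]) = partEnt μ g := by
  unfold partEnt
  refine Finset.sum_congr rfl fun c _ => ?_
  have : (g ∘ T^[t]) ⁻¹' {c} = T^[t] ⁻¹' (g ⁻¹' {c}) := rfl
  rw [this, (hT.iterate t).measure_preimage (hg c).nullMeasurableSet]

omit [MeasurableSpace X] [Fintype ι] [IsProbabilityMeasure μ] hT hα in
lemma mem_of_mem_image_add {S : Finset ℕ} {t a : ℕ}
    (h : a ∈ S.image (fun s => s + t)) : a - t ∈ S ∧ t ≤ a := by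
  obtain ⟨s, hs, rfl⟩ := Finset.mem_image.mp h
  constructor
  · simpa using hs
  · omega

lemma HS_shift (S : Finset ℕ) (t : ℕ) :
    HS μ T α (S.image (fun s => s + t)) = HS μ T α S := by
  have step1 : HS μ T α (S.image (fun s => s + t))
      = partEnt μ ((fun x => fun i : {i // i ∈ S} => α (T^[(i : ℕ)] x)) ∘ T^[t]) := by
    refine partEnt_eq_of μ (fib_tuple T hT.measurable hα _)
      (fun c => ((fib_tuple T hT.measurable hα S) c).preimage (hT.measurable.iterate t))
      (fun u => fun a : {i // i ∈ S.image (fun s => s + t)} =>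
        u ⟨a.1 - t, (mem_of_mem_image_add a.2).1⟩)
      (fun v => fun i : {i // i ∈ S} => v ⟨i.1 + t, Finset.mem_image_of_mem _ i.2⟩)
      ?_ ?_
    · funext x
      funext a
      simp only [Function.comp_apply]
      have ht : a.1 - t + t = a.1 := by
        have := (mem_of_mem_image_add a.2).2
        omega
      rw [← Function.iterate_add_apply, ht]
    · funext x
      funext i
      simp only [Function.comp_apply]
      rw [← Function.iterate_add_apply]
  rw [step1, partEnt_comp_iterate μ T hT hα (fib_tuple T hT.measurable hα S) t]
  rfl

lemma HS_empty : HS μ T α ∅ = 0 := by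
  haveI : IsEmpty {i // i ∈ (∅ : Finset ℕ)} := ⟨fun i => absurd i.2 (Finset.notMem_empty _)⟩
  unfold HS partEnt
  haveI : Unique ({i // i ∈ (∅ : Finset ℕ)} → ι) := Pi.uniqueOfIsEmpty _
  rw [Fintype.sum_unique]
  have h : (fun x => fun i : {i // i ∈ (∅ : Finset ℕ)} => α (T^[(i : ℕ)] x)) ⁻¹' {default}
      = Set.univ := by
    ext x
    simp only [Set.mem_preimage, Set.mem_singleton_iff, Set.mem_univ, iff_true]
    exact Subsingleton.elim _ _
  rw [h, measure_univ, ENNReal.toReal_one, Real.negMulLog_one]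

lemma HS_single (j : ℕ) : HS μ T α {j} = partEnt μ α := by
  have step1 : HS μ T α {j} = partEnt μ (α ∘ T^[j]) := by
    refine partEnt_eq_of μ (fib_tuple T hT.measurable hα _)
      (fib_comp_iterate T hT.measurable hα j)
      (fun c => fun _ : {i // i ∈ ({j} : Finset ℕ)} => c)
      (fun u => u ⟨j, Finset.mem_singleton_self j⟩) ?_ rfl
    funext x
    funext i
    have : i.1 = j := Finset.mem_singleton.mp i.2
    simp only [Function.comp_apply, this]
  rw [step1, partEnt_comp_iterate μ T hT hα hα j]

lemma HS_card_le (S : Finset ℕ) : HS μ T α S ≤ S.card * partEnt μ α := by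
  classical
  induction S using Finset.induction_on with
  | empty => rw [HS_empty μ T hT hα]; simp
  | @insert j S hj ih =>
    have h1 : insert j S = {j} ∪ S := Finset.insert_eq j S
    calc HS μ T α (insert j S) ≤ HS μ T α {j} + HS μ T α S := by
          rw [h1]; exact HS_union_le μ T hT hα {j} S
      _ ≤ partEnt μ α + S.card * partEnt μ α := by
          rw [HS_single μ T hT hα j]; linarith [ih]
      _ = (insert j S).card * partEnt μ α := by
          rw [Finset.card_insert_of_notMem hj]
          push_cast
          ring

lemma HS_range_le {A : Finset ℕ} {N : ℕ} (h : A ⊆ Finset.range N) :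
    HS μ T α (Finset.range N) ≤ HS μ T α A + ((N : ℝ) - A.card) * partEnt μ α := by
  have h1 : A ∪ (Finset.range N \ A) = Finset.range N := Finset.union_sdiff_of_subset h
  have h2 : ((Finset.range N \ A).card : ℝ) = (N : ℝ) - A.card := by
    rw [Finset.card_sdiff_of_subset h, Finset.card_range]
    have := Finset.card_le_card h
    rw [Finset.card_range] at this
    push_cast [Nat.cast_sub this]
    ring
  calc HS μ T α (Finset.range N) = HS μ T α (A ∪ (Finset.range N \ A)) := by rw [h1]
    _ ≤ HS μ T α A + HS μ T α (Finset.range N \ A) := HS_union_le μ T hT hα _ _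
    _ ≤ HS μ T α A + (Finset.range N \ A).card * partEnt μ α := by
        linarith [HS_card_le μ T hT hα (Finset.range N \ A)]
    _ = _ := by rw [h2]

lemma HS_range_add_le (a b : ℕ) :
    HS μ T α (Finset.range (a + b)) ≤ HS μ T α (Finset.range a) + HS μ T α (Finset.range b) := by
  have h : Finset.range (a + b) = Finset.range a ∪ (Finset.range b).image (fun s => s + a) := by
    ext i
    simp only [Finset.mem_range, Finset.mem_union, Finset.mem_image]
    constructor
    · intro hi
      rcases lt_or_ge i a with h | h
      · exact Or.inl h
      · exact Or.inr ⟨i - a, by omega, by omega⟩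
    · rintro (h | ⟨s, hs, rfl⟩) <;> omega
  rw [h]
  calc HS μ T α _ ≤ HS μ T α (Finset.range a) + HS μ T α ((Finset.range b).image (fun s => s + a)) :=
        HS_union_le μ T hT hα _ _
    _ = _ := by rw [HS_shift μ T hT hα (Finset.range b) a]

end HSL


def blow (k : ℕ) (S : Finset ℕ) : Finset ℕ :=
  S.biUnion (fun s => (Finset.range k).image (fun j => s + j))

lemma mem_blow_iff {k : ℕ} {S : Finset ℕ} {i : ℕ} :
    i ∈ blow k S ↔ ∃ s ∈ S, s ≤ i ∧ i < s + k := by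
  unfold blow
  simp only [Finset.mem_biUnion, Finset.mem_image, Finset.mem_range]
  constructor
  · rintro ⟨s, hs, j, hj, rfl⟩; exact ⟨s, hs, by omega, by omega⟩
  · rintro ⟨s, hs, h1, h2⟩; exact ⟨s, hs, i - s, by omega, by omega⟩

lemma mem_blow {k : ℕ} {S : Finset ℕ} {s j : ℕ} (hs : s ∈ S) (hj : j < k) :
    s + j ∈ blow k S := mem_blow_iff.mpr ⟨s, hs, by omega, by omega⟩

lemma blow_range {k n : ℕ} (hk : 1 ≤ k) (hn : 1 ≤ n) :
    blow k (Finset.range n) = Finset.range (n + k - 1) := by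
  ext i
  rw [mem_blow_iff]
  simp only [Finset.mem_range]
  constructor
  · rintro ⟨s, hs, h1, h2⟩; omega
  · intro hi
    rcases lt_or_ge i n with h | h
    · exact ⟨i, h, le_refl i, by omega⟩
    · exact ⟨n - 1, by omega, by omega, by omega⟩

lemma blow_singleton {k s : ℕ} :
    blow k {s} = (Finset.range k).image (fun j => j + s) := by
  unfold blow
  rw [Finset.singleton_biUnion]
  exact Finset.image_congr (fun j _ => add_comm s j)

lemma blow_subset_range {k n : ℕ} (hk : 1 ≤ k) {S : Finset ℕ} (hS : S ⊆ Finset.range n) :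
    blow k S ⊆ Finset.range (n + k - 1) := by
  intro i hi
  rw [mem_blow_iff] at hi
  obtain ⟨s, hs, h1, h2⟩ := hi
  have := Finset.mem_range.mp (hS hs)
  exact Finset.mem_range.mpr (by omega)

lemma fib_of_measurable {X : Type*} [MeasurableSpace X] {n : ℕ} {f : X → Fin n}
    (hf : Measurable f) : Fib f :=
  fun c => hf (measurableSet_singleton c)

section Refine
variable {X : Type*} [MeasurableSpace X] (μ : Measure X) [IsProbabilityMeasure μ]
  (T : X → X) {m : ℕ} (α : X → Fin m) (k : ℕ)

noncomputable def refineF : X → Fin (m ^ k) :=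
  fun x => finFunctionFinEquiv (fun j : Fin k => α (T^[(j : ℕ)] x))

lemma measurable_refineF (hTm : Measurable T) (hα : Measurable α) :
    Measurable (refineF T α k) := by
  apply measurable_to_countable
  intro y
  have h : (refineF T α k) ⁻¹' {refineF T α k y}
      = ⋂ j : Fin k, T^[(j : ℕ)] ⁻¹' (α ⁻¹' {finFunctionFinEquiv.symm (refineF T α k y) j}) := by
    ext x
    simp only [Set.mem_preimage, Set.mem_singleton_iff, Set.mem_iInter, refineF]
    rw [← Equiv.eq_symm_apply, funext_iff]
  rw [h]
  exact MeasurableSet.iInter fun j =>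
    (hTm.iterate (j : ℕ)) (hα (measurableSet_singleton _))

lemma HS_refineF (hT : MeasurePreserving T μ μ) (hα : Measurable α) (S : Finset ℕ) :
    HS μ T (refineF T α k) S = HS μ T α (blow k S) := by
  have hch : ∀ a : {i // i ∈ blow k S}, ∃ p : ℕ × ℕ, p.1 ∈ S ∧ p.2 < k ∧ p.1 + p.2 = a.1 := by
    intro a
    obtain ⟨s, hs, h1, h2⟩ := mem_blow_iff.mp a.2
    exact ⟨(s, a.1 - s), hs, by omega, by omega⟩
  choose pf hp1 hp2 hp3 using hch
  refine partEnt_eq_of μ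
    (fib_tuple T hT.measurable (fib_of_measurable (measurable_refineF T α k hT.measurable hα)) S)
    (fib_tuple T hT.measurable (fib_of_measurable hα) (blow k S))
    (fun u => fun i : {i // i ∈ S} =>
      finFunctionFinEquiv (fun j : Fin k => u ⟨i.1 + j.1, mem_blow i.2 j.2⟩))
    (fun v => fun a : {i // i ∈ blow k S} =>
      finFunctionFinEquiv.symm (v ⟨(pf a).1, hp1 a⟩) ⟨(pf a).2, hp2 a⟩)
    ?_ ?_
  · funext x
    funext i
    simp only [Function.comp_apply, refineF]
    congr 1
    funext j
    rw [Nat.add_comm ((i : ℕ)) ((j : ℕ)), Function.iterate_add_apply]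
  · funext x
    funext a
    simp only [Function.comp_apply, refineF, Equiv.symm_apply_apply]
    have h : (pf a).2 + (pf a).1 = (a : ℕ) := by have := hp3 a; omega
    rw [← Function.iterate_add_apply, h]
end Refine


lemma filter_not_blow (n k i : ℕ) :
    ((Finset.range n).powerset.filter (fun S => i ∉ blow k S))
      = (Finset.range n \ (Finset.range n).filter (fun s => s ≤ i ∧ i < s + k)).powerset := by
  ext S
  simp only [Finset.mem_filter, Finset.mem_powerset, mem_blow_iff, not_exists]
  constructor
  · rintro ⟨hsub, hnb⟩ x hx
    rw [Finset.mem_sdiff, Finset.mem_filter]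
    refine ⟨hsub hx, fun h => ?_⟩
    exact hnb x ⟨hx, h.2⟩
  · intro h
    refine ⟨fun x hx => (Finset.mem_sdiff.mp (h hx)).1, fun x hx => ?_⟩
    exact (Finset.mem_sdiff.mp (h hx.1)).2
      (Finset.mem_filter.mpr ⟨(Finset.mem_sdiff.mp (h hx.1)).1, hx.2.1, hx.2.2⟩)

lemma count_card (n k i : ℕ) :
    ((Finset.range n).powerset.filter (fun S => i ∉ blow k S)).card
      = 2 ^ (n - (min (i+1) n - (i+1-k))) := by
  have hW : (Finset.range n).filter (fun s => s ≤ i ∧ i < s + k)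
      = Finset.Ico (i+1-k) (min (i+1) n) := by
    ext s
    simp only [Finset.mem_filter, Finset.mem_range, Finset.mem_Ico]
    omega
  rw [filter_not_blow, Finset.card_powerset, Finset.card_sdiff_of_subset (Finset.filter_subset _ _),
    Finset.card_range, hW, Nat.card_Ico]

lemma count_bound {n k i : ℕ} (hn : 1 ≤ n) (hk : 1 ≤ k) (hi : i < n + k - 1) :
    ((2 : ℝ) ^ (n - (min (i+1) n - (i+1-k))))
      ≤ 2^n * (((2:ℝ)^(i+1))⁻¹ + ((2:ℝ)^(n+k-1-i))⁻¹ + ((2:ℝ)^(min n k))⁻¹) := by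
  set w : ℕ := min (i+1) n - (i+1-k) with hw
  have hwn : w ≤ n := by omega
  have hsplit : (2:ℝ) ^ (n - w) * 2 ^ w = 2 ^ n := by
    rw [← pow_add]; congr 1; omega
  have key : ∀ x : ℕ, x ≤ w → ((2:ℝ)^w)⁻¹ ≤ ((2:ℝ)^x)⁻¹ := fun x hx => by
    apply inv_anti₀ (by positivity)
    exact pow_le_pow_right₀ (by norm_num) hx
  have hx : min (min (i+1) (n+k-1-i)) (min n k) ≤ w := by omega
  have hcases : min (min (i+1) (n+k-1-i)) (min n k) = i+1
      ∨ min (min (i+1) (n+k-1-i)) (min n k) = n+k-1-i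
      ∨ min (min (i+1) (n+k-1-i)) (min n k) = min n k := by omega
  have h1 : (0:ℝ) ≤ ((2:ℝ)^(i+1))⁻¹ := by positivity
  have h2 : (0:ℝ) ≤ ((2:ℝ)^(n+k-1-i))⁻¹ := by positivity
  have h3 : (0:ℝ) ≤ ((2:ℝ)^(min n k))⁻¹ := by positivity
  have hbound : ((2:ℝ)^w)⁻¹ ≤ ((2:ℝ)^(i+1))⁻¹ + ((2:ℝ)^(n+k-1-i))⁻¹ + ((2:ℝ)^(min n k))⁻¹ := by
    rcases hcases with h | h | h
    · have := key _ (h ▸ hx); linarith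
    · have := key _ (h ▸ hx); linarith
    · have := key _ (h ▸ hx); linarith
  calc (2:ℝ) ^ (n - w) = 2^n * ((2:ℝ)^w)⁻¹ := by
        rw [← hsplit]; field_simp
    _ ≤ _ := by
        apply mul_le_mul_of_nonneg_left hbound (by positivity)

lemma geo_sum (N : ℕ) : ∑ i ∈ Finset.range N, ((2:ℝ)^(i+1))⁻¹ ≤ 1 := by
  have h : ∀ i : ℕ, ((2:ℝ)^(i+1))⁻¹ = (1/2:ℝ)^i * (1/2) := by
    intro i
    rw [div_pow, one_pow, pow_succ]
    field_simp
  rw [Finset.sum_congr rfl (fun i _ => h i), ← Finset.sum_mul,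
    geom_sum_eq (by norm_num : (1/2:ℝ) ≠ 1) N]
  have h0 : (0:ℝ) ≤ (1/2:ℝ)^N := by positivity
  have heq : ((1/2:ℝ)^N - 1)/((1/2:ℝ) - 1) * (1/2) = 1 - (1/2:ℝ)^N := by ring
  rw [heq]
  linarith

lemma geo_sum_rev (N : ℕ) : ∑ i ∈ Finset.range N, ((2:ℝ)^(N-i))⁻¹ ≤ 1 := by
  have := Finset.sum_range_reflect (fun j => ((2:ℝ)^(j+1))⁻¹) N
  have h2 : ∑ i ∈ Finset.range N, ((2:ℝ)^(N-i))⁻¹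
      = ∑ j ∈ Finset.range N, ((2:ℝ)^((N - 1 - j)+1))⁻¹ := by
    refine Finset.sum_congr rfl fun i hi => ?_
    have := Finset.mem_range.mp hi
    congr 2
    omega
  rw [h2, this]
  exact geo_sum N

lemma miss_sum {n k : ℕ} (hn : 1 ≤ n) (hk : 1 ≤ k) :
    ∑ S ∈ (Finset.range n).powerset, (((n + k - 1 : ℕ) : ℝ) - (blow k S).card)
      ≤ 2^n * (2 + ((n+k-1 : ℕ) : ℝ) * ((2:ℝ)^(min n k))⁻¹) := by
  classical
  set N := n + k - 1 with hN
  have cardeq : ∀ S ∈ (Finset.range n).powerset,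
      ((N : ℝ) - (blow k S).card) = ∑ i ∈ Finset.range N, (if i ∉ blow k S then (1:ℝ) else 0) := by
    intro S hS
    rw [Finset.sum_boole]
    have hfil : (Finset.range N).filter (fun i => i ∉ blow k S) = Finset.range N \ blow k S := by
      rw [Finset.sdiff_eq_filter]
    have hsub : blow k S ⊆ Finset.range N := blow_subset_range hk (Finset.mem_powerset.mp hS)
    rw [hfil, Finset.card_sdiff_of_subset hsub, Finset.card_range]
    have := Finset.card_le_card hsub
    rw [Finset.card_range] at this
    push_cast [Nat.cast_sub this]
    ring
  rw [Finset.sum_congr rfl cardeq, Finset.sum_comm]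
  have inner : ∀ i ∈ Finset.range N,
      ∑ S ∈ (Finset.range n).powerset, (if i ∉ blow k S then (1:ℝ) else 0)
        ≤ 2^n * (((2:ℝ)^(i+1))⁻¹ + ((2:ℝ)^(N-i))⁻¹ + ((2:ℝ)^(min n k))⁻¹) := by
    intro i hi
    rw [Finset.sum_boole, count_card n k i]
    push_cast
    exact_mod_cast count_bound hn hk (Finset.mem_range.mp hi)
  calc ∑ i ∈ Finset.range N, ∑ S ∈ (Finset.range n).powerset, (if i ∉ blow k S then (1:ℝ) else 0)
      ≤ ∑ i ∈ Finset.range N,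
          2^n * (((2:ℝ)^(i+1))⁻¹ + ((2:ℝ)^(N-i))⁻¹ + ((2:ℝ)^(min n k))⁻¹) :=
        Finset.sum_le_sum inner
    _ = 2^n * ((∑ i ∈ Finset.range N, ((2:ℝ)^(i+1))⁻¹)
          + (∑ i ∈ Finset.range N, ((2:ℝ)^(N-i))⁻¹)
          + (N : ℝ) * ((2:ℝ)^(min n k))⁻¹) := by
        rw [← Finset.mul_sum]
        congr 1
        rw [Finset.sum_add_distrib, Finset.sum_add_distrib, Finset.sum_const, Finset.card_range]
        push_cast
        ring
    _ ≤ 2^n * (1 + 1 + (N : ℝ) * ((2:ℝ)^(min n k))⁻¹) := by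
        have g1 := geo_sum N
        have g2 := geo_sum_rev N
        have : (0:ℝ) ≤ (N : ℝ) * ((2:ℝ)^(min n k))⁻¹ := by positivity
        apply mul_le_mul_of_nonneg_left _ (by positivity)
        linarith
    _ = _ := by norm_num


section ENT
variable {X ι : Type*} [MeasurableSpace X] [Fintype ι]
  (μ : Measure X) [IsProbabilityMeasure μ] (T : X → X)
  (hT : MeasurePreserving T μ μ) {α : X → ι} (hα : Fib α)

omit hT hα in
lemma ent_bdd : BddBelow (Set.range fun n : ℕ+ => HS μ T α (Finset.range (n : ℕ)) / (n : ℕ)) := by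
  refine ⟨0, fun y hy => ?_⟩
  obtain ⟨n, rfl⟩ := hy
  exact div_nonneg (HS_nonneg μ T _) (by positivity)

omit hT hα in
lemma asc_bdd : BddBelow (Set.range fun n : ℕ+ => (2 ^ (n : ℕ) : ℝ)⁻¹ *
    (∑ S ∈ (Finset.range (n : ℕ)).powerset, HS μ T α S) / (n : ℕ)) := by
  refine ⟨0, fun y hy => ?_⟩
  obtain ⟨n, rfl⟩ := hy
  have hs : 0 ≤ ∑ S ∈ (Finset.range (n : ℕ)).powerset, HS μ T α S :=
    Finset.sum_nonneg fun S _ => HS_nonneg μ T S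
  positivity

omit hT hα in
lemma entMu_nonneg : 0 ≤ entMu μ T α :=
  le_ciInf fun n => div_nonneg (HS_nonneg μ T _) (by positivity)

lemma HS_range_ge {n : ℕ} (hn : 1 ≤ n) :
    (n : ℝ) * entMu μ T α ≤ HS μ T α (Finset.range n) := by
  have h : entMu μ T α ≤ HS μ T α (Finset.range n) / n :=
    ciInf_le (ent_bdd μ T (α := α)) (⟨n, hn⟩ : ℕ+)
  have hn0 : (0:ℝ) < n := by exact_mod_cast hn
  rw [le_div_iff₀ hn0] at h
  calc (n:ℝ) * entMu μ T α = entMu μ T α * n := by ring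
    _ ≤ _ := h

include hT hα in
lemma ascMu_le_entMu : ascMu μ T α ≤ entMu μ T α := by
  apply ciInf_mono (asc_bdd μ T)
  intro n
  have hsum : ∑ S ∈ (Finset.range (n : ℕ)).powerset, HS μ T α S
      ≤ (2 ^ (n : ℕ) : ℝ) * HS μ T α (Finset.range (n : ℕ)) := by
    have := Finset.sum_le_card_nsmul ((Finset.range (n : ℕ)).powerset) (HS μ T α)
      (HS μ T α (Finset.range (n : ℕ)))
      (fun S hS => HS_mono μ T hT hα (Finset.mem_powerset.mp hS))
    rw [Finset.card_powerset, Finset.card_range, nsmul_eq_mul] at this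
    exact_mod_cast this
  have h2 : (0:ℝ) < 2 ^ (n : ℕ) := by positivity
  have hn0 : (0:ℝ) < ((n : ℕ) : ℝ) := by exact_mod_cast n.2
  have key : (2 ^ (n : ℕ) : ℝ)⁻¹ * (∑ S ∈ (Finset.range (n : ℕ)).powerset, HS μ T α S)
      ≤ HS μ T α (Finset.range (n : ℕ)) := by
    calc (2 ^ (n : ℕ) : ℝ)⁻¹ * (∑ S ∈ (Finset.range (n : ℕ)).powerset, HS μ T α S)
        ≤ (2 ^ (n : ℕ) : ℝ)⁻¹ * ((2 ^ (n : ℕ) : ℝ) * HS μ T α (Finset.range (n : ℕ))) :=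
          mul_le_mul_of_nonneg_left hsum (by positivity)
      _ = HS μ T α (Finset.range (n : ℕ)) := by field_simp
  gcongr

include hT hα in
lemma entMu_le_partEnt : entMu μ T α ≤ partEnt μ α := by
  have h := ciInf_le (ent_bdd μ T (α := α)) (1 : ℕ+)
  simpa [entMu, Finset.range_one, HS_single μ T hT hα 0] using h

end ENT

section KEY
variable {X : Type*} [MeasurableSpace X] (μ : Measure X) [IsProbabilityMeasure μ]
  (T : X → X) (hT : MeasurePreserving T μ μ) {m : ℕ} {α : X → Fin m} (hα : Measurable α)
  {k : ℕ} (hk : 1 ≤ k)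

include hT hα in
lemma HS_range_mul (M : ℕ) (n₀ : ℕ) :
    HS μ T α (Finset.range (M * n₀)) ≤ M * HS μ T α (Finset.range n₀) := by
  induction M with
  | zero => simp [HS_empty μ T hT (fib_of_measurable hα)]
  | succ M ih =>
    have hh : (M+1) * n₀ = M * n₀ + n₀ := by ring
    rw [hh]
    calc HS μ T α (Finset.range (M * n₀ + n₀))
        ≤ HS μ T α (Finset.range (M * n₀)) + HS μ T α (Finset.range n₀) :=
          HS_range_add_le μ T hT (fib_of_measurable hα) _ _
      _ ≤ M * HS μ T α (Finset.range n₀) + HS μ T α (Finset.range n₀) := by linarith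
      _ = (M+1 : ℕ) * HS μ T α (Finset.range n₀) := by push_cast; ring

include hT hα hk in
lemma entMu_refine_le {δ : ℝ} (hδ : 0 < δ) :
    entMu μ T (refineF T α k) ≤ entMu μ T α + δ := by
  set e := entMu μ T α with he
  have he0 : 0 ≤ e := entMu_nonneg μ T
  have hlt : entMu μ T α < e + δ/2 := by rw [← he]; linarith
  obtain ⟨n₀, hn₀⟩ := exists_lt_of_ciInf_lt hlt
  have hn₀pos : (0:ℝ) < ((n₀ : ℕ) : ℝ) := by exact_mod_cast n₀.2
  rw [div_lt_iff₀ hn₀pos] at hn₀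
  obtain ⟨M₀, hM₀⟩ := exists_nat_ge ((2*((k:ℝ)-1)*(e+δ))/(((n₀:ℕ):ℝ) * δ))
  set M := max M₀ k with hM
  have hMk : k ≤ M := le_max_right _ _
  have hMn : k ≤ M * (n₀ : ℕ) := le_trans hMk (Nat.le_mul_of_pos_right M n₀.2)
  set nn : ℕ := M * (n₀:ℕ) - (k - 1) with hnn
  have hnn1 : 1 ≤ nn := by omega
  have hNN : nn + k - 1 = M * (n₀:ℕ) := by omega
  have hnncast : (nn:ℝ) = (M:ℝ) * ((n₀:ℕ):ℝ) - ((k:ℝ) - 1) := by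
    have h1 : (k - 1 : ℕ) ≤ M * (n₀:ℕ) := by omega
    rw [hnn]
    push_cast [Nat.cast_sub h1, Nat.cast_sub hk]
    ring
  have hnn0 : (0:ℝ) < (nn:ℝ) := by exact_mod_cast hnn1
  have step : entMu μ T (refineF T α k) ≤ HS μ T α (Finset.range (M * (n₀:ℕ))) / nn := by
    have h : entMu μ T (refineF T α k) ≤ HS μ T (refineF T α k) (Finset.range nn) / nn :=
      ciInf_le (ent_bdd μ T) (⟨nn, hnn1⟩ : ℕ+)
    rwa [HS_refineF μ T α k hT hα, blow_range hk hnn1, hNN] at h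
  have step2 : HS μ T α (Finset.range (M * (n₀:ℕ))) ≤ (M:ℝ) * (((n₀:ℕ):ℝ) * (e + δ/2)) := by
    calc HS μ T α (Finset.range (M * (n₀:ℕ))) ≤ M * HS μ T α (Finset.range (n₀:ℕ)) :=
          HS_range_mul μ T hT hα M _
      _ ≤ (M:ℝ) * (((n₀:ℕ):ℝ) * (e + δ/2)) := by
          have : (0:ℝ) ≤ (M:ℝ) := by positivity
          nlinarith [hn₀]
  have hM2 : 2*((k:ℝ)-1)*(e+δ) ≤ (M:ℝ) * (((n₀:ℕ):ℝ) * δ) := by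
    rw [div_le_iff₀ (by positivity : (0:ℝ) < ((n₀:ℕ):ℝ) * δ)] at hM₀
    have hMM : (M₀:ℝ) ≤ (M:ℝ) := by exact_mod_cast le_max_left M₀ k
    nlinarith [hM₀, mul_pos hn₀pos hδ]
  calc entMu μ T (refineF T α k) ≤ HS μ T α (Finset.range (M * (n₀:ℕ))) / nn := step
    _ ≤ ((M:ℝ) * (((n₀:ℕ):ℝ) * (e + δ/2))) / nn := by gcongr
    _ ≤ e + δ := by
        rw [div_le_iff₀ hnn0, hnncast]
        have hk1 : (1:ℝ) ≤ (k:ℝ) := by exact_mod_cast hk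
        nlinarith [hM2]

include hT hα hk in
lemma ascMu_refine_ge :
    entMu μ T α - (4 * partEnt μ α / k + 3 * ((2:ℝ)^(k/2))⁻¹ * partEnt μ α)
      ≤ ascMu μ T (refineF T α k) := by
  set e := entMu μ T α with he
  set H := partEnt μ α with hH
  set q : ℝ := ((2:ℝ)^(k/2))⁻¹ with hq
  have he0 : 0 ≤ e := entMu_nonneg μ T
  have hH0 : 0 ≤ H := partEnt_nonneg μ α
  have hq0 : 0 ≤ q := by positivity
  have hk0 : (0:ℝ) < (k:ℝ) := by exact_mod_cast hk
  have hεk0 : 0 ≤ 4*H/(k:ℝ) + 3*q*H := by positivity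
  apply le_ciInf
  intro n
  set n' := (n:ℕ) with hn'
  have hn1 : 1 ≤ n' := n.2
  have hn0 : (0:ℝ) < (n':ℝ) := by exact_mod_cast hn1
  have h2n : (0:ℝ) < (2:ℝ)^n' := by positivity
  have hfib : Fib (refineF T α k) :=
    fib_of_measurable (measurable_refineF T α k hT.measurable hα)
  rcases le_or_gt (2*n') k with hcase | hcase
  · -- wide case : k ≥ 2 n'
    have hks : ∀ S ∈ ((Finset.range n').powerset).erase ∅,
        (k:ℝ) * e ≤ HS μ T (refineF T α k) S := by
      intro S hS
      obtain ⟨s, hs⟩ := Finset.nonempty_of_ne_empty (Finset.ne_of_mem_erase hS)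
      calc (k:ℝ) * e ≤ HS μ T α (Finset.range k) := HS_range_ge μ T hk
        _ = HS μ T α (blow k {s}) := by
            rw [blow_singleton]
            exact (HS_shift μ T hT (fib_of_measurable hα) (Finset.range k) s).symm
        _ = HS μ T (refineF T α k) {s} := (HS_refineF μ T α k hT hα {s}).symm
        _ ≤ HS μ T (refineF T α k) S :=
            HS_mono μ T hT hfib (Finset.singleton_subset_iff.mpr hs)
    have hsum : ((2:ℝ)^n' - 1) * ((k:ℝ) * e)
        ≤ ∑ S ∈ (Finset.range n').powerset, HS μ T (refineF T α k) S := by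
      have hemp : ∅ ∈ (Finset.range n').powerset := Finset.empty_mem_powerset _
      rw [← Finset.add_sum_erase _ _ hemp, HS_empty μ T hT hfib, zero_add]
      have hcard : (((Finset.range n').powerset.erase ∅).card) = 2^n' - 1 := by
        rw [Finset.card_erase_of_mem hemp, Finset.card_powerset, Finset.card_range]
      have h2 := Finset.card_nsmul_le_sum (((Finset.range n').powerset).erase ∅) _ _ hks
      rw [hcard, nsmul_eq_mul] at h2
      calc ((2:ℝ)^n' - 1) * ((k:ℝ)*e) = ((2^n' - 1 : ℕ):ℝ) * ((k:ℝ)*e) := by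
            have h1 : (1:ℕ) ≤ 2^n' := Nat.one_le_two_pow
            push_cast [Nat.cast_sub h1]
            ring
        _ ≤ _ := h2
    have harith : e ≤ ((2:ℝ)^n')⁻¹ * (((2:ℝ)^n' - 1) * ((k:ℝ)*e)) / n' := by
      rw [le_div_iff₀ hn0, inv_mul_eq_div, le_div_iff₀ h2n]
      have ha2 : (2:ℝ) ≤ (2:ℝ)^n' := by
        calc (2:ℝ) = 2^1 := by norm_num
          _ ≤ 2^n' := pow_le_pow_right₀ one_le_two hn1
      have hkn : 2*(n':ℝ) ≤ (k:ℝ) := by exact_mod_cast hcase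
      nlinarith [mul_nonneg (mul_nonneg (sub_nonneg.mpr ha2) hn0.le) he0,
        mul_nonneg (mul_nonneg (sub_nonneg.mpr (one_le_two.trans ha2)) (sub_nonneg.mpr hkn)) he0]
    calc e - (4*H/(k:ℝ) + 3*q*H) ≤ e := by linarith
      _ ≤ ((2:ℝ)^n')⁻¹ * (((2:ℝ)^n' - 1) * ((k:ℝ)*e)) / n' := harith
      _ ≤ ((2:ℝ)^n')⁻¹ * (∑ S ∈ (Finset.range n').powerset, HS μ T (refineF T α k) S) / n' := by
          gcongr
  · -- narrow case : k < 2 n'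
    set N : ℕ := n' + k - 1 with hN
    have hN1 : 1 ≤ N := by omega
    have hNcast : (N:ℝ) = (n':ℝ) + (k:ℝ) - 1 := by
      rw [hN]
      have : 1 ≤ n' + k := by omega
      push_cast [Nat.cast_sub this]
      ring
    have hNe : (N:ℝ) * e ≤ HS μ T α (Finset.range N) := HS_range_ge μ T hN1
    set q' : ℝ := ((2:ℝ)^(min n' k))⁻¹ with hq'
    have hq'0 : 0 ≤ q' := by positivity
    have hq'q : q' ≤ q := by
      rw [hq, hq']
      apply inv_anti₀ (by positivity)
      exact pow_le_pow_right₀ one_le_two (by omega)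
    have per : ∀ S ∈ (Finset.range n').powerset,
        HS μ T α (Finset.range N) - ((N:ℝ) - (blow k S).card) * H
          ≤ HS μ T (refineF T α k) S := by
      intro S hS
      rw [HS_refineF μ T α k hT hα S]
      have h := HS_range_le μ T hT (fib_of_measurable hα)
        (blow_subset_range hk (Finset.mem_powerset.mp hS))
      rw [← hN] at h
      linarith
    have hsum : (2:ℝ)^n' * ((N:ℝ)*e) - H * ((2:ℝ)^n' * (2 + (N:ℝ)*q'))
        ≤ ∑ S ∈ (Finset.range n').powerset, HS μ T (refineF T α k) S := by
      have h1 := Finset.sum_le_sum per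
      have h2 : ∑ S ∈ (Finset.range n').powerset,
          (HS μ T α (Finset.range N) - ((N:ℝ) - (blow k S).card) * H)
          = 2^n' * HS μ T α (Finset.range N)
            - (∑ S ∈ (Finset.range n').powerset, ((N:ℝ) - (blow k S).card)) * H := by
        rw [Finset.sum_sub_distrib, Finset.sum_const, Finset.card_powerset, Finset.card_range,
          ← Finset.sum_mul, nsmul_eq_mul]
        push_cast
        ring
      have h3 := miss_sum (n := n') (k := k) hn1 hk
      rw [← hN] at h3
      have h4 : (∑ S ∈ (Finset.range n').powerset, ((N:ℝ) - (blow k S).card)) * H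
          ≤ (2^n' * (2 + (N:ℝ)*q')) * H := by
        apply mul_le_mul_of_nonneg_right _ hH0
        exact h3
      nlinarith [mul_le_mul_of_nonneg_left hNe (le_of_lt h2n)]
    have hstep : (N:ℝ)*e - H*(2 + (N:ℝ)*q')
        ≤ ((2:ℝ)^n')⁻¹ * (∑ S ∈ (Finset.range n').powerset, HS μ T (refineF T α k) S) := by
      have h5 : ((2:ℝ)^n')⁻¹ * ((2:ℝ)^n' * ((N:ℝ)*e) - H * ((2:ℝ)^n' * (2 + (N:ℝ)*q')))
          = (N:ℝ)*e - H*(2 + (N:ℝ)*q') := by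
        field_simp
      calc (N:ℝ)*e - H*(2 + (N:ℝ)*q')
          = ((2:ℝ)^n')⁻¹ * ((2:ℝ)^n' * ((N:ℝ)*e) - H * ((2:ℝ)^n' * (2 + (N:ℝ)*q'))) := h5.symm
        _ ≤ _ := mul_le_mul_of_nonneg_left hsum (by positivity)
    have hfinal : e - (4*H/(k:ℝ) + 3*q*H) ≤ ((N:ℝ)*e - H*(2 + (N:ℝ)*q')) / n' := by
      rw [le_div_iff₀ hn0]
      have hkn : (k:ℝ) ≤ 2*(n':ℝ) := by exact_mod_cast hcase.le
      have hN3 : (N:ℝ) ≤ 3 * n' := by rw [hNcast]; linarith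
      have hNn : (n':ℝ) ≤ (N:ℝ) := by rw [hNcast]; have : (1:ℝ) ≤ (k:ℝ) := by exact_mod_cast hk
                                      linarith
      have A1 : (N:ℝ)*q'*H ≤ 3*(n':ℝ)*q*H := by
        apply mul_le_mul_of_nonneg_right _ hH0
        have hNn0 : (0:ℝ) ≤ (N:ℝ) := by positivity
        exact mul_le_mul hN3 hq'q hq'0 (by positivity)
      have A2 : 2*H ≤ 4*H/(k:ℝ)*(n':ℝ) := by
        rw [div_mul_eq_mul_div, le_div_iff₀ hk0]
        nlinarith
      have A3 : (n':ℝ)*e ≤ (N:ℝ)*e := mul_le_mul_of_nonneg_right hNn he0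
      nlinarith [A1, A2, A3]
    calc e - (4*H/(k:ℝ) + 3*q*H)
        ≤ ((N:ℝ)*e - H*(2 + (N:ℝ)*q')) / n' := hfinal
      _ ≤ ((2:ℝ)^n')⁻¹ * (∑ S ∈ (Finset.range n').powerset, HS μ T (refineF T α k) S) / n' := by
          gcongr
end KEY

section FINAL
variable {X : Type*} [MeasurableSpace X] (μ : Measure X) [IsProbabilityMeasure μ]
  (T : X → X) (hT : MeasurePreserving T μ μ)

lemma partEnt_one (f : X → Fin 1) : partEnt μ f = 0 := by
  unfold partEnt
  rw [Fintype.sum_unique]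
  have h : f ⁻¹' {default} = Set.univ := by
    ext x
    simp only [Set.mem_preimage, Set.mem_singleton_iff, Set.mem_univ, iff_true]
    exact Subsingleton.elim _ _
  rw [h, measure_univ, ENNReal.toReal_one, Real.negMulLog_one]

lemma ascMu_nonneg {ι : Type*} [Fintype ι] (α : X → ι) : 0 ≤ ascMu μ T α := by
  apply le_ciInf
  intro n
  have hs : 0 ≤ ∑ S ∈ (Finset.range (n : ℕ)).powerset, HS μ T α S :=
    Finset.sum_nonneg fun S _ => HS_nonneg μ T S
  positivity

include hT in
lemma entMu_one (f : X → Fin 1) (hf : Measurable f) : entMu μ T f = 0 :=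
  le_antisymm ((entMu_le_partEnt μ T hT (fib_of_measurable hf)).trans_eq (partEnt_one μ f))
    (entMu_nonneg μ T)

lemma inv_two_pow_half_le {k : ℕ} (hk : 1 ≤ k) : ((2:ℝ)^(k/2))⁻¹ ≤ 2 / k := by
  have h1 : k ≤ 2 * 2^(k/2) := by
    have := Nat.lt_two_pow_self (n := k/2)
    omega
  have h1' : (k:ℝ) ≤ 2 * 2^(k/2) := by exact_mod_cast h1
  have hk0 : (0:ℝ) < (k:ℝ) := by exact_mod_cast hk
  have heq : ((2:ℝ)^(k/2))⁻¹ = 2 / (2 * 2^(k/2)) := by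
    rw [eq_div_iff (by positivity)]
    field_simp
  rw [heq]
  exact div_le_div_of_nonneg_left (by norm_num) hk0 h1'

include hT in
lemma approx_key {m : ℕ} (α : {f : X → Fin m // Measurable f}) {ε : ℝ} (hε : 0 < ε) :
    ∃ (m' : ℕ) (β : {f : X → Fin m' // Measurable f}),
      entMu μ T α.1 - ε ≤ ascMu μ T β.1 ∧
      entMu μ T α.1 - ε ≤ 2 * ascMu μ T β.1 - entMu μ T β.1 := by
  have hH0 : 0 ≤ partEnt μ α.1 := partEnt_nonneg μ α.1
  obtain ⟨k₀, hk₀⟩ := exists_nat_ge (30 * partEnt μ α.1 / ε)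
  set k := max 1 k₀ with hkdef
  have hk : 1 ≤ k := le_max_left _ _
  have hk0 : (0:ℝ) < (k:ℝ) := by exact_mod_cast hk
  have hεk : 4 * partEnt μ α.1 / (k:ℝ) + 3 * ((2:ℝ)^(k/2))⁻¹ * partEnt μ α.1 ≤ ε / 3 := by
    have h1 : ((2:ℝ)^(k/2))⁻¹ ≤ 2 / k := inv_two_pow_half_le hk
    have h2 : 3 * ((2:ℝ)^(k/2))⁻¹ * partEnt μ α.1 ≤ 6 * partEnt μ α.1 / k :=
      calc 3 * ((2:ℝ)^(k/2))⁻¹ * partEnt μ α.1 ≤ 3 * (2/(k:ℝ)) * partEnt μ α.1 :=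
            mul_le_mul_of_nonneg_right (mul_le_mul_of_nonneg_left h1 (by norm_num)) hH0
        _ = 6 * partEnt μ α.1 / k := by ring
    have h4 : 10 * partEnt μ α.1 / (k:ℝ) ≤ ε / 3 := by
      rw [div_le_div_iff₀ hk0 (by norm_num)]
      have hkk : 30 * partEnt μ α.1 / ε ≤ (k:ℝ) :=
        le_trans hk₀ (by exact_mod_cast le_max_right 1 k₀)
      rw [div_le_iff₀ hε] at hkk
      nlinarith
    have h5 : 4 * partEnt μ α.1 / (k:ℝ) + 6 * partEnt μ α.1 / k = 10 * partEnt μ α.1 / k := by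
      ring
    linarith
  have h1 := ascMu_refine_ge μ T hT α.2 hk
  have h2 := entMu_refine_le μ T hT α.2 hk (show (0:ℝ) < ε/3 by linarith)
  refine ⟨m ^ k, ⟨refineF T α.1 k, measurable_refineF T α.1 k hT.measurable α.2⟩, ?_, ?_⟩
  · show entMu μ T α.1 - ε ≤ ascMu μ T (refineF T α.1 k)
    linarith
  · show entMu μ T α.1 - ε ≤ 2 * ascMu μ T (refineF T α.1 k) - entMu μ T (refineF T α.1 k)
    linarith

include hT in
lemma sup_eq_sup_ent (F : ∀ m : ℕ, {f : X → Fin m // Measurable f} → ℝ)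
    (hFle : ∀ (m : ℕ) (α : {f : X → Fin m // Measurable f}), F m α ≤ entMu μ T α.1)
    (hF0 : ∃ (m₁ : ℕ) (α₁ : {f : X → Fin m₁ // Measurable f}), 0 ≤ F m₁ α₁)
    (happrox : ∀ (m : ℕ) (α : {f : X → Fin m // Measurable f}) (ε : ℝ), 0 < ε →
      ∃ (m' : ℕ) (β : {f : X → Fin m' // Measurable f}), entMu μ T α.1 - ε ≤ F m' β) :
    (⨆ m : ℕ, ⨆ α : {f : X → Fin m // Measurable f}, F m α)
      = (⨆ m : ℕ, ⨆ α : {f : X → Fin m // Measurable f}, entMu μ T α.1) := by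
  set v : ℕ → ℝ := fun m => ⨆ α : {f : X → Fin m // Measurable f}, entMu μ T α.1 with hv
  set u : ℕ → ℝ := fun m => ⨆ α : {f : X → Fin m // Measurable f}, F m α with hu
  have hbE : ∀ m : ℕ, BddAbove (Set.range fun α : {f : X → Fin m // Measurable f} =>
      entMu μ T α.1) := by
    intro m
    refine ⟨Real.log (Fintype.card (Fin m)), ?_⟩
    rintro y ⟨α, rfl⟩
    exact (entMu_le_partEnt μ T hT (fib_of_measurable α.2)).trans
      (partEnt_le_log μ (fib_of_measurable α.2))
  have hbF : ∀ m : ℕ, BddAbove (Set.range fun α : {f : X → Fin m // Measurable f} =>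
      F m α) := by
    intro m
    refine ⟨Real.log (Fintype.card (Fin m)), ?_⟩
    rintro y ⟨α, rfl⟩
    exact (hFle m α).trans ((entMu_le_partEnt μ T hT (fib_of_measurable α.2)).trans
      (partEnt_le_log μ (fib_of_measurable α.2)))
  have huv : ∀ m, u m ≤ v m := by
    intro m
    rcases isEmpty_or_nonempty {f : X → Fin m // Measurable f} with hmE | hmN
    · rw [hu, hv]
      simp [Real.iSup_of_isEmpty]
    · exact ciSup_le fun α => (hFle m α).trans (le_ciSup (hbE m) α)
  obtain ⟨m₁, α₁, hα₁⟩ := hF0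
  have hu0 : 0 ≤ u m₁ := le_trans hα₁ (le_ciSup (hbF m₁) α₁)
  by_cases hbdd : BddAbove (Set.range v)
  · have hbu : BddAbove (Set.range u) := by
      obtain ⟨b, hb⟩ := hbdd
      refine ⟨b, ?_⟩
      rintro y ⟨m, rfl⟩
      exact (huv m).trans (hb ⟨m, rfl⟩)
    have hsupu0 : 0 ≤ ⨆ m, u m := le_trans hu0 (le_ciSup hbu m₁)
    apply le_antisymm
    · exact ciSup_le fun m => (huv m).trans (le_ciSup hbdd m)
    · refine ciSup_le fun m => ?_
      rcases isEmpty_or_nonempty {f : X → Fin m // Measurable f} with hmE | hmN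
      · rw [hv]
        simp only [Real.iSup_of_isEmpty]
        exact hsupu0
      · refine ciSup_le fun α => ?_
        refine le_of_forall_pos_le_add fun ε hε => ?_
        obtain ⟨m', β, hβ⟩ := happrox m α ε hε
        calc entMu μ T α.1 ≤ F m' β + ε := by linarith
          _ ≤ u m' + ε := by
              have := le_ciSup (hbF m') β
              linarith
          _ ≤ (⨆ m, u m) + ε := by
              have := le_ciSup hbu m'
              linarith
  · have hbu : ¬ BddAbove (Set.range u) := by
      intro hbad
      apply hbdd
      obtain ⟨b, hb⟩ := hbad
      have hb0 : 0 ≤ b := le_trans hu0 (hb ⟨m₁, rfl⟩)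
      refine ⟨b + 1, ?_⟩
      rintro y ⟨m, rfl⟩
      rcases isEmpty_or_nonempty {f : X → Fin m // Measurable f} with hmE | hmN
      · rw [hv]
        simp only [Real.iSup_of_isEmpty]
        linarith
      · refine ciSup_le fun α => ?_
        obtain ⟨m', β, hβ⟩ := happrox m α 1 one_pos
        have h1 : F m' β ≤ u m' := le_ciSup (hbF m') β
        have h2 : u m' ≤ b := hb ⟨m', rfl⟩
        linarith
    rw [Real.iSup_of_not_bddAbove hbdd, Real.iSup_of_not_bddAbove hbu]

end FINAL

/-- With `c_S^n = 2^{-n}`, the supremum of `Asc_μ(X,α,T)` over all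
finite measurable partitions `α` equals the Kolmogorov–Sinai entropy
`h_μ(X,T) = sup_α h_μ(X,α,T)`, and likewise for the measure-theoretic intricacy
`Int_μ(X,α,T) = 2·Asc_μ(X,α,T) − h_μ(X,α,T)`. -/
theorem sup_ascMu_eq_entropy {X : Type*} [MeasurableSpace X]
    (μ : Measure X) [IsProbabilityMeasure μ]
    (T : X → X) (hT : MeasurePreserving T μ μ) :
    (⨆ m : ℕ, ⨆ α : {f : X → Fin m // Measurable f}, ascMu μ T α.1)
      = (⨆ m : ℕ, ⨆ α : {f : X → Fin m // Measurable f}, entMu μ T α.1) ∧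
    (⨆ m : ℕ, ⨆ α : {f : X → Fin m // Measurable f},
        (2 * ascMu μ T α.1 - entMu μ T α.1))
      = (⨆ m : ℕ, ⨆ α : {f : X → Fin m // Measurable f}, entMu μ T α.1) := by
  constructor
  · apply sup_eq_sup_ent μ T hT
    · exact fun m α => ascMu_le_entMu μ T hT (fib_of_measurable α.2)
    · exact ⟨1, ⟨fun _ => 0, measurable_const⟩, ascMu_nonneg μ T _⟩
    · intro m α ε hε
      obtain ⟨m', β, h1, _⟩ := approx_key μ T hT α hε
      exact ⟨m', β, h1⟩
  · apply sup_eq_sup_ent μ T hT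
    · intro m α
      have := ascMu_le_entMu μ T hT (fib_of_measurable α.2)
      linarith
    · refine ⟨1, ⟨fun _ => 0, measurable_const⟩, ?_⟩
      have h1 := ascMu_nonneg μ T (fun _ : X => (0 : Fin 1))
      have h2 := entMu_one μ T hT (fun _ : X => (0 : Fin 1)) measurable_const
      simp only at h2 ⊢
      rw [h2]
      linarith
    · intro m α ε hε
      obtain ⟨m', β, _, h2⟩ := approx_key μ T hT α hε
      exact ⟨m', β, h2⟩
end

section
/- Let (X,ℬ,μ,T) be a 1-step Markov shift with finite time-0 generating partition α and c_S^n = 2^{-n}. Then Asc_μ(X,α,T) = (1/2) Σ_{i=1}^∞ 2^{-i} H_μ(α | α_i), where α_i = T^{-i}α and H_μ(·|·) denotes conditional entropy of partitions. -/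
set_option linter.unusedSectionVars false
open MeasureTheory Filter Topology

section Aux
variable {A : Type*} [Fintype A] [DecidableEq A]
    [MeasurableSpace A] [MeasurableSingletonClass A]

/-- cylinder set over coordinates in `S` with values `v` -/
def cyl (S : Finset ℕ) (v : ℕ → A) : Set (ℤ → A) := {x | ∀ j ∈ S, x j = v j}

lemma cyl_measurable (S : Finset ℕ) (v : ℕ → A) : MeasurableSet (cyl S v) := by
  have : cyl S v = ⋂ j ∈ (S : Set ℕ), {x : ℤ → A | x j = v j} := by
    ext x; simp [cyl, Set.mem_iInter]
  rw [this]
  refine MeasurableSet.biInter S.countable_toSet (fun j _ => ?_)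
  have : {x : ℤ → A | x j = v j} = (fun x : ℤ → A => x (j:ℤ)) ⁻¹' {v j} := rfl
  rw [this]
  exact (measurable_pi_apply (j : ℤ)) (measurableSet_singleton (v j))

lemma cyl_congr {S : Finset ℕ} {v w : ℕ → A} (h : ∀ j ∈ S, v j = w j) :
    cyl S v = cyl S w := by
  ext x; constructor <;> intro hx j hj
  · rw [hx j hj, h j hj]
  · rw [hx j hj, h j hj]

/-- sum-out one coordinate -/
lemma cyl_sum_out (μ : Measure (ℤ → A)) {S : Finset ℕ} {t : ℕ} (ht : t ∉ S) (v : ℕ → A) :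
    μ (cyl S v) = ∑ a : A, μ (cyl (insert t S) (Function.update v t a)) := by
  have hU : cyl S v = ⋃ a : A, cyl (insert t S) (Function.update v t a) := by
    ext x; constructor
    · intro hx
      refine Set.mem_iUnion.2 ⟨x t, fun j hj => ?_⟩
      rcases Finset.mem_insert.1 hj with rfl | hj
      · simp [Function.update_self]
      · have : j ≠ t := fun h => ht (h ▸ hj)
        rw [Function.update_of_ne this]; exact hx j hj
    · intro hx
      rcases Set.mem_iUnion.1 hx with ⟨a, ha⟩
      intro j hj
      have : j ≠ t := fun h => ht (h ▸ hj)
      have h2 := ha j (Finset.mem_insert_of_mem hj)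
      rwa [Function.update_of_ne this] at h2
  rw [hU, measure_iUnion, tsum_fintype]
  · intro a b hab
    refine Set.disjoint_left.2 fun x hxa hxb => hab ?_
    have h1 := hxa t (Finset.mem_insert_self t S)
    have h2 := hxb t (Finset.mem_insert_self t S)
    rw [Function.update_self] at h1 h2
    rw [← h1, ← h2]
  · exact fun a => cyl_measurable _ _

/-- partition-sum over fibers of a finite-valued map with measurable fibers -/
lemma measure_eq_sum_fibers {κ : Type*} [Fintype κ] (μ : Measure (ℤ → A))
    (β : (ℤ → A) → κ) (hfib : ∀ c, MeasurableSet (β ⁻¹' {c}))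
    {E : Set (ℤ → A)} (hE : MeasurableSet E) :
    μ E = ∑ c : κ, μ (E ∩ β ⁻¹' {c}) := by
  have hU : E = ⋃ c : κ, E ∩ β ⁻¹' {c} := by
    ext x; constructor
    · intro hx; exact Set.mem_iUnion.2 ⟨β x, hx, rfl⟩
    · intro hx; rcases Set.mem_iUnion.1 hx with ⟨c, hc, _⟩; exact hc
  conv_lhs => rw [hU]
  rw [measure_iUnion, tsum_fintype]
  · intro a b hab
    refine Set.disjoint_left.2 fun x hxa hxb => hab ?_
    rw [← hxa.2, ← hxb.2]
  · exact fun c => hE.inter (hfib c)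

/-- d-step transition "matrix" from `P` -/
def qmat (P : A → A → ℝ) : ℕ → A → A → ℝ
  | 0 => fun a b => if a = b then 1 else 0
  | (n+1) => fun a b => ∑ c, qmat P n a c * P c b

lemma qmat_nonneg {P : A → A → ℝ} (hP0 : ∀ a b, 0 ≤ P a b) (n : ℕ) (a b : A) :
    0 ≤ qmat P n a b := by
  induction n generalizing a b with
  | zero => simp only [qmat]; positivity
  | succ n ih =>
    simp only [qmat]
    exact Finset.sum_nonneg fun c _ => mul_nonneg (ih a c) (hP0 c b)

lemma qmat_row {P : A → A → ℝ} (hProw : ∀ a, ∑ b, P a b = 1) (n : ℕ) (a : A) :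
    ∑ b, qmat P n a b = 1 := by
  induction n generalizing a with
  | zero => simp [qmat]
  | succ n ih =>
    simp only [qmat]
    rw [Finset.sum_comm]
    calc ∑ c, ∑ b, qmat P n a c * P c b = ∑ c, qmat P n a c * ∑ b, P c b := by
            simp [Finset.mul_sum]
      _ = 1 := by simp [hProw, ih a]

lemma qmat_le_one {P : A → A → ℝ} (hP0 : ∀ a b, 0 ≤ P a b)
    (hProw : ∀ a, ∑ b, P a b = 1) (n : ℕ) (a b : A) : qmat P n a b ≤ 1 := by
  rw [← qmat_row hProw n a]
  exact Finset.single_le_sum (fun c _ => qmat_nonneg hP0 n a c) (Finset.mem_univ b)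

variable (P : A → A → ℝ) (p : A → ℝ) (μ : Measure (ℤ → A))

/-- abbreviation for the Markov hypothesis -/
def MarkovHyp : Prop := ∀ (i : ℤ) (k : ℕ) (w : ℕ → A),
      μ {x | ∀ j : ℕ, j ≤ k → x (i + j) = w j} =
        ENNReal.ofReal (p (w 0) * ∏ j ∈ Finset.range k, P (w j) (w (j + 1)))

variable {P p μ}

lemma markov_single (hM : MarkovHyp P p μ) (m : ℕ) (a : A) :
    μ {x : ℤ → A | x m = a} = ENNReal.ofReal (p a) := by
  have h := hM (m : ℤ) 0 (fun _ => a)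
  simp only [Finset.range_zero, Finset.prod_empty, mul_one] at h
  rw [← h]
  congr 1
  ext x
  simp only [Set.mem_setOf_eq, Nat.le_zero, forall_eq, Nat.cast_zero, add_zero]

lemma markov_full (hM : MarkovHyp P p μ) (k : ℕ) (w : ℕ → A) :
    μ (cyl (Finset.range (k+1)) w) =
      ENNReal.ofReal (p (w 0) * ∏ j ∈ Finset.range k, P (w j) (w (j + 1))) := by
  have h := hM 0 k w
  have hset : {x : ℤ → A | ∀ j : ℕ, j ≤ k → x ((0 : ℤ) + j) = w j} = cyl (Finset.range (k+1)) w := by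
    ext x
    simp only [Set.mem_setOf_eq, cyl, Finset.mem_range, Nat.lt_succ_iff, zero_add]
  rw [hset] at h
  exact h

/-- one-step Markov property for cylinders: base case -/
lemma ca_one (hM : MarkovHyp P p μ) (hp0 : ∀ a, 0 ≤ p a) (hP0 : ∀ a b, 0 ≤ P a b) :
    ∀ (N : ℕ) (S : Finset ℕ) (hS : S.Nonempty),
      (Finset.range (S.max' hS + 1) \ S).card = N →
      ∀ v : ℕ → A, μ (cyl (insert (S.max' hS + 1) S) v) =
        μ (cyl S v) * ENNReal.ofReal (P (v (S.max' hS)) (v (S.max' hS + 1))) := by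
  intro N
  induction N with
  | zero =>
    intro S hS hcard v
    set m := S.max' hS with hm
    have hsub : S ⊆ Finset.range (m+1) := fun j hj =>
      Finset.mem_range.2 (Nat.lt_succ_of_le (S.le_max' j hj))
    have hSeq : S = Finset.range (m+1) := by
      have : Finset.range (m+1) \ S = ∅ := Finset.card_eq_zero.1 hcard
      have h2 : Finset.range (m+1) ⊆ S := fun j hj => by
        by_contra hjS
        exact absurd (Finset.mem_sdiff.2 ⟨hj, hjS⟩) (by simp [this])
      exact le_antisymm hsub h2
    rw [hSeq]
    have hins : insert (m+1) (Finset.range (m+1)) = Finset.range (m+2) :=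
      (Finset.range_add_one).symm
    rw [hins, markov_full hM (m+1) v, markov_full hM m v,
      Finset.prod_range_succ, ← mul_assoc, ENNReal.ofReal_mul]
    exact mul_nonneg (hp0 _) (Finset.prod_nonneg fun j _ => hP0 _ _)
  | succ N ih =>
    intro S hS hcard v
    set m := S.max' hS with hm
    have hne : (Finset.range (m+1) \ S).Nonempty := by
      rw [← Finset.card_pos, hcard]; omega
    obtain ⟨t, ht⟩ := hne
    obtain ⟨htr, htS⟩ := Finset.mem_sdiff.1 ht
    have htm : t < m + 1 := Finset.mem_range.1 htr
    have htne : t ≠ m := by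
      intro h; exact htS (h ▸ S.max'_mem hS)
    have htlt : t < m := lt_of_le_of_ne (Nat.lt_succ_iff.1 htm) htne
    -- max of insert t S is still m
    have hS2 : (insert t S).Nonempty := Finset.insert_nonempty _ _
    have hmax2 : (insert t S).max' hS2 = m := by
      apply le_antisymm
      · apply Finset.max'_le
        intro y hy
        rcases Finset.mem_insert.1 hy with rfl | hy
        · exact le_of_lt htlt
        · exact S.le_max' y hy
      · exact Finset.le_max' _ m (Finset.mem_insert_of_mem (S.max'_mem hS))
    have hcard2 : (Finset.range ((insert t S).max' hS2 + 1) \ insert t S).card = N := by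
      rw [hmax2]
      have : Finset.range (m+1) \ insert t S = (Finset.range (m+1) \ S).erase t := by
        ext y
        simp only [Finset.mem_sdiff, Finset.mem_insert, Finset.mem_erase]
        tauto
      rw [this, Finset.card_erase_of_mem ht, hcard]
      omega
    have htnotin : t ∉ insert (m+1) S := by
      simp only [Finset.mem_insert]
      push_neg
      exact ⟨by omega, htS⟩
    rw [cyl_sum_out μ htnotin v]
    have hstep : ∀ a : A,
        μ (cyl (insert t (insert (m+1) S)) (Function.update v t a)) =
        μ (cyl (insert t S) (Function.update v t a)) *
          ENNReal.ofReal (P (v m) (v (m+1))) := by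
      intro a
      have hcomm : insert t (insert (m+1) S) = insert (m+1) (insert t S) :=
        Finset.insert_comm _ _ _
      have h1 := ih (insert t S) hS2 hcard2 (Function.update v t a)
      rw [hmax2] at h1
      rw [hcomm, h1, Function.update_of_ne htne.symm, Function.update_of_ne (by omega : m + 1 ≠ t)]
    simp_rw [hstep]
    rw [← Finset.sum_mul, ← cyl_sum_out μ htS v]

/-- d-step Markov property for cylinders -/
lemma ca_gen (hM : MarkovHyp P p μ) (hp0 : ∀ a, 0 ≤ p a) (hP0 : ∀ a b, 0 ≤ P a b) :
    ∀ (d : ℕ), 1 ≤ d → ∀ (S : Finset ℕ) (hS : S.Nonempty) (v : ℕ → A),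
      μ (cyl (insert (S.max' hS + d) S) v) =
        μ (cyl S v) * ENNReal.ofReal (qmat P d (v (S.max' hS)) (v (S.max' hS + d))) := by
  intro d hd
  induction d, hd using Nat.le_induction with
  | base =>
    intro S hS v
    rw [ca_one hM hp0 hP0 _ S hS rfl v]
    congr 1
    congr 1
    show P _ _ = qmat P 1 _ _
    simp [qmat]
  | succ d hd ih =>
    intro S hS v
    set m := S.max' hS with hm
    have hnotin : m + d ∉ insert (m + (d+1)) S := by
      simp only [Finset.mem_insert]
      push_neg
      constructor
      · omega
      · intro hmem
        have := S.le_max' _ hmem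
        omega
    rw [cyl_sum_out μ hnotin v]
    have hstep : ∀ a : A,
        μ (cyl (insert (m + d) (insert (m + (d+1)) S)) (Function.update v (m+d) a)) =
        μ (cyl S v) * ENNReal.ofReal (qmat P d (v m) a * P a (v (m + (d+1)))) := by
      intro a
      have hcomm : insert (m+d) (insert (m + (d+1)) S) = insert (m + (d+1)) (insert (m+d) S) :=
        Finset.insert_comm _ _ _
      have hS2 : (insert (m+d) S).Nonempty := Finset.insert_nonempty _ _
      have hmax2 : (insert (m+d) S).max' hS2 = m + d := by
        apply le_antisymm
        · apply Finset.max'_le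
          intro y hy
          rcases Finset.mem_insert.1 hy with rfl | hy
          · exact le_rfl
          · have := S.le_max' y hy; omega
        · exact Finset.le_max' _ _ (Finset.mem_insert_self _ _)
      have h1 := ca_one hM hp0 hP0 ((Finset.range ((insert (m+d) S).max' hS2 + 1) \ insert (m+d) S).card)
        (insert (m+d) S) hS2 rfl (Function.update v (m+d) a)
      rw [hmax2] at h1
      have harr : m + d + 1 = m + (d + 1) := by omega
      rw [harr, ← hcomm] at h1
      rw [h1]
      have h2 := ih S hS (Function.update v (m+d) a)
      rw [← hm] at h2
      have hagree : cyl S (Function.update v (m+d) a) = cyl S v := by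
        apply cyl_congr
        intro j hj
        have : j ≠ m + d := by
          have := S.le_max' j hj; omega
        rw [Function.update_of_ne this]
      rw [h2, hagree, Function.update_of_ne (by omega : m ≠ m + d),
        Function.update_self, Function.update_of_ne (by omega : m + (d+1) ≠ m + d)]
      rw [mul_assoc, ← ENNReal.ofReal_mul (qmat_nonneg hP0 d _ _)]
    simp_rw [hstep]
    rw [← Finset.mul_sum, ← ENNReal.ofReal_sum_of_nonneg
      (fun a _ => mul_nonneg (qmat_nonneg hP0 d _ _) (hP0 _ _))]
    congr 2

/-- canonical extension of a configuration on `S` -/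
def extS (a0 : A) (S : Finset ℕ) (c : {i // i ∈ S} → A) : ℕ → A :=
  fun j => if h : j ∈ S then c ⟨j, h⟩ else a0

lemma extS_mem (a0 : A) (S : Finset ℕ) (c : {i // i ∈ S} → A) {j : ℕ} (hj : j ∈ S) :
    extS a0 S c j = c ⟨j, hj⟩ := dif_pos hj

lemma fiber_cyl (a0 : A) (S : Finset ℕ) (c : {i // i ∈ S} → A) :
    (fun x : ℤ → A => fun i : {i // i ∈ S} => x (i : ℕ)) ⁻¹' {c} = cyl S (extS a0 S c) := by
  ext x
  simp only [Set.mem_preimage, Set.mem_singleton_iff]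
  constructor
  · intro h j hj
    rw [extS_mem a0 S c hj]
    exact congrFun h ⟨j, hj⟩
  · intro h
    funext i
    have h2 := h i i.2
    rw [extS_mem a0 S c i.2] at h2
    simpa using h2

variable {T : (ℤ → A) → (ℤ → A)}

lemma iter_apply (hTdef : ∀ x i, T x i = x (i + 1)) :
    ∀ (k : ℕ) (x : ℤ → A) (i : ℤ), T^[k] x i = x (i + k) := by
  intro k
  induction k with
  | zero => intro x i; simp
  | succ k ih =>
    intro x i
    rw [Function.iterate_succ_apply, ih (T x) i, hTdef]
    congr 1
    push_cast
    ring

lemma HS_eq (hTdef : ∀ x i, T x i = x (i + 1)) (a0 : A) (S : Finset ℕ) :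
    HS μ T (fun x => x 0) S =
      ∑ c : ({i // i ∈ S} → A), Real.negMulLog ((μ (cyl S (extS a0 S c))).toReal) := by
  unfold HS partEnt
  apply Finset.sum_congr rfl
  intro c _
  congr 2
  have hfun : (fun x : ℤ → A => fun i : {i // i ∈ S} => (fun y : ℤ → A => y 0) (T^[(i : ℕ)] x))
      = (fun x : ℤ → A => fun i : {i // i ∈ S} => x ((i : ℕ) : ℤ)) := by
    funext x i
    simp only
    rw [iter_apply hTdef]
    simp
  rw [hfun, fiber_cyl a0 S c]

lemma HS_empty_s17 (hTdef : ∀ x i, T x i = x (i + 1)) [IsProbabilityMeasure μ] (a0 : A) :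
    HS μ T (fun x => x 0) (∅ : Finset ℕ) = 0 := by
  rw [HS_eq (μ := μ) hTdef a0]
  apply Finset.sum_eq_zero
  intro c _
  have : cyl (∅ : Finset ℕ) (extS a0 ∅ c) = Set.univ := by
    ext x; simp [cyl]
  rw [this, measure_univ]
  simp

lemma HS_single_s17 (hM : MarkovHyp P p μ) (hp0 : ∀ a, 0 ≤ p a)
    (hTdef : ∀ x i, T x i = x (i + 1)) (a0 : A) (j : ℕ) :
    HS μ T (fun x => x 0) ({j} : Finset ℕ) = ∑ a, Real.negMulLog (p a) := by
  rw [HS_eq (μ := μ) hTdef a0]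
  have hj : j ∈ ({j} : Finset ℕ) := Finset.mem_singleton_self j
  have key : ∀ c : ({i // i ∈ ({j} : Finset ℕ)} → A),
      cyl {j} (extS a0 {j} c) = {x : ℤ → A | x j = c ⟨j, hj⟩} := by
    intro c
    ext x
    constructor
    · intro h
      have h2 := h j hj
      rwa [extS_mem a0 _ c hj] at h2
    · intro h k hk
      have hkj : k = j := Finset.mem_singleton.1 hk
      subst hkj
      rw [extS_mem a0 _ c hk]
      exact h
  have hbij : Function.Bijective (fun c : ({i // i ∈ ({j} : Finset ℕ)} → A) => c ⟨j, hj⟩) := by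
    constructor
    · intro c1 c2 h12
      funext i
      have : i = ⟨j, hj⟩ := Subtype.ext (Finset.mem_singleton.1 i.2)
      rw [this]; exact h12
    · intro a
      exact ⟨fun _ => a, rfl⟩
  refine Fintype.sum_bijective _ hbij _ _ ?_
  intro c
  rw [key c, markov_single hM j (c ⟨j, hj⟩), ENNReal.toReal_ofReal (hp0 _)]

lemma marginal (hM : MarkovHyp P p μ) (hp0 : ∀ a, 0 ≤ p a) [IsProbabilityMeasure μ]
    (S : Finset ℕ) (hS : S.Nonempty) (a0 : A) (f : A → ℝ) :
    ∑ c : ({i // i ∈ S} → A),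
        (μ (cyl S (extS a0 S c))).toReal * f (c ⟨S.max' hS, S.max'_mem hS⟩)
      = ∑ a, p a * f a := by
  have hmem : S.max' hS ∈ S := S.max'_mem hS
  set m := S.max' hS with hmdef
  -- step 1 : the marginal of coordinate m is p
  have step1 : ∀ a : A,
      (∑ c : ({i // i ∈ S} → A),
        if c ⟨m, hmem⟩ = a then (μ (cyl S (extS a0 S c))).toReal else 0) = p a := by
    intro a
    have hE : MeasurableSet {x : ℤ → A | x (m : ℤ) = a} := by
      have : {x : ℤ → A | x (m : ℤ) = a} = (fun x : ℤ → A => x (m : ℤ)) ⁻¹' {a} := rfl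
      rw [this]
      exact (measurable_pi_apply (m : ℤ)) (measurableSet_singleton a)
    have hfib : ∀ c : ({i // i ∈ S} → A),
        MeasurableSet ((fun x : ℤ → A => fun i : {i // i ∈ S} => x ((i : ℕ) : ℤ)) ⁻¹' {c}) := by
      intro c
      rw [fiber_cyl a0 S c]
      exact cyl_measurable S _
    have hsum := measure_eq_sum_fibers μ
      (fun x : ℤ → A => fun i : {i // i ∈ S} => x ((i : ℕ) : ℤ)) hfib hE
    have hterm : ∀ c : ({i // i ∈ S} → A),
        {x : ℤ → A | x (m : ℤ) = a} ∩
          ((fun x : ℤ → A => fun i : {i // i ∈ S} => x ((i : ℕ) : ℤ)) ⁻¹' {c})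
        = if c ⟨m, hmem⟩ = a then cyl S (extS a0 S c) else ∅ := by
      intro c
      rw [fiber_cyl a0 S c]
      by_cases h : c ⟨m, hmem⟩ = a
      · rw [if_pos h]
        apply Set.inter_eq_self_of_subset_right
        intro x hx
        have := hx m hmem
        rw [extS_mem a0 S c hmem] at this
        show x (m : ℤ) = a
        rw [this, h]
      · rw [if_neg h]
        ext x
        simp only [Set.mem_inter_iff, Set.mem_setOf_eq, Set.mem_empty_iff_false, iff_false,
          not_and]
        intro hxa hxc
        apply h
        have := hxc m hmem
        rw [extS_mem a0 S c hmem] at this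
        rw [← this, hxa]
    simp only [hterm] at hsum
    have htr : (μ {x : ℤ → A | x (m : ℤ) = a}).toReal = p a := by
      rw [markov_single hM m a, ENNReal.toReal_ofReal (hp0 a)]
    rw [← htr, hsum, ENNReal.toReal_sum (fun c _ => measure_ne_top μ _)]
    apply Finset.sum_congr rfl
    intro c _
    split_ifs with h
    · rfl
    · simp
  -- step 2 : group by the value at coordinate m
  calc ∑ c : ({i // i ∈ S} → A),
        (μ (cyl S (extS a0 S c))).toReal * f (c ⟨m, hmem⟩)
      = ∑ c : ({i // i ∈ S} → A), ∑ a,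
          if c ⟨m, hmem⟩ = a then (μ (cyl S (extS a0 S c))).toReal * f a else 0 := by
        refine Finset.sum_congr rfl fun c _ => ?_
        rw [Finset.sum_ite_eq]
        simp
    _ = ∑ a, ∑ c : ({i // i ∈ S} → A),
          if c ⟨m, hmem⟩ = a then (μ (cyl S (extS a0 S c))).toReal * f a else 0 :=
        Finset.sum_comm
    _ = ∑ a, (∑ c : ({i // i ∈ S} → A),
          if c ⟨m, hmem⟩ = a then (μ (cyl S (extS a0 S c))).toReal else 0) * f a := by
        refine Finset.sum_congr rfl fun a _ => ?_
        rw [Finset.sum_mul]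
        refine Finset.sum_congr rfl fun c _ => ?_
        rw [ite_mul, zero_mul]
    _ = ∑ a, p a * f a := by
        refine Finset.sum_congr rfl fun a _ => ?_
        rw [step1 a]

/-- Key entropy increment: adding a coordinate `d` past the max adds `∑ p a * h_d(a)`. -/
lemma HS_insert (hM : MarkovHyp P p μ) (hp0 : ∀ a, 0 ≤ p a) (hP0 : ∀ a b, 0 ≤ P a b)
    (hProw : ∀ a, ∑ b, P a b = 1) (hTdef : ∀ x i, T x i = x (i + 1))
    [IsProbabilityMeasure μ] (a0 : A)
    (S : Finset ℕ) (hS : S.Nonempty) (d : ℕ) (hd : 1 ≤ d) :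
    HS μ T (fun x => x 0) (insert (S.max' hS + d) S) = HS μ T (fun x => x 0) S
      + ∑ a, p a * ∑ b, Real.negMulLog (qmat P d a b) := by
  have hmem : S.max' hS ∈ S := S.max'_mem hS
  set m := S.max' hS with hmdef
  set t := m + d with htdef
  have ht : t ∉ S := by
    intro hmemt
    have := S.le_max' t hmemt
    omega
  -- the bijection between configurations
  set emap : (({i // i ∈ S} → A) × A) → ({i // i ∈ insert t S} → A) :=
    fun z => fun i => if h : (i : ℕ) ∈ S then z.1 ⟨(i : ℕ), h⟩ else z.2 with hemap
  have hbij : Function.Bijective emap := by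
    constructor
    · intro z1 z2 h12
      have hc : z1.1 = z2.1 := by
        funext i
        have := congrFun h12 ⟨(i : ℕ), Finset.mem_insert_of_mem i.2⟩
        simp only [hemap, dif_pos i.2] at this
        simpa using this
      have hb : z1.2 = z2.2 := by
        have := congrFun h12 ⟨t, Finset.mem_insert_self t S⟩
        simpa only [hemap, dif_neg ht] using this
      exact Prod.ext hc hb
    · intro c'
      refine ⟨(fun i => c' ⟨(i : ℕ), Finset.mem_insert_of_mem i.2⟩,
        c' ⟨t, Finset.mem_insert_self t S⟩), ?_⟩
      funext i
      simp only [hemap]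
      by_cases h : (i : ℕ) ∈ S
      · rw [dif_pos h, show (⟨(i : ℕ), Finset.mem_insert_of_mem h⟩ : {i // i ∈ insert t S}) = i
          from Subtype.ext rfl]
      · have hit : (i : ℕ) = t := by
          rcases Finset.mem_insert.1 i.2 with h' | h'
          · exact h'
          · exact absurd h' h
        rw [dif_neg h, show (⟨t, Finset.mem_insert_self t S⟩ : {i // i ∈ insert t S}) = i
          from Subtype.ext hit.symm]
  rw [HS_eq (μ := μ) hTdef a0 (insert t S), HS_eq (μ := μ) hTdef a0 S]
  -- rewrite the big sum through the bijection
  rw [← Fintype.sum_bijective emap hbij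
    (fun z => Real.negMulLog ((μ (cyl (insert t S) (extS a0 (insert t S) (emap z)))).toReal))
    (fun c' => Real.negMulLog ((μ (cyl (insert t S) (extS a0 (insert t S) c'))).toReal))
    (fun z => rfl)]
  -- compute each term
  have key : ∀ z : (({i // i ∈ S} → A) × A),
      (μ (cyl (insert t S) (extS a0 (insert t S) (emap z)))).toReal
        = (μ (cyl S (extS a0 S z.1))).toReal * qmat P d (z.1 ⟨m, hmem⟩) z.2 := by
    intro z
    have hca := ca_gen hM hp0 hP0 d hd S hS (extS a0 (insert t S) (emap z))
    rw [← hmdef, ← htdef] at hca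
    have hvm : extS a0 (insert t S) (emap z) m = z.1 ⟨m, hmem⟩ := by
      rw [extS_mem a0 _ _ (Finset.mem_insert_of_mem hmem)]
      simp only [hemap, dif_pos hmem]
    have hvt : extS a0 (insert t S) (emap z) t = z.2 := by
      rw [extS_mem a0 _ _ (Finset.mem_insert_self t S)]
      simp only [hemap, dif_neg ht]
    have hcylS : cyl S (extS a0 (insert t S) (emap z)) = cyl S (extS a0 S z.1) := by
      apply cyl_congr
      intro j hj
      rw [extS_mem a0 _ _ (Finset.mem_insert_of_mem hj), extS_mem a0 _ _ hj]
      simp only [hemap, dif_pos hj]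
    rw [hca, hvm, hvt, hcylS, ENNReal.toReal_mul,
      ENNReal.toReal_ofReal (qmat_nonneg hP0 d _ _)]
  simp only [key]
  -- expand the product sum
  rw [Fintype.sum_prod_type]
  have expand : ∀ c : ({i // i ∈ S} → A), ∑ b,
      Real.negMulLog ((μ (cyl S (extS a0 S c))).toReal * qmat P d (c ⟨m, hmem⟩) b)
      = Real.negMulLog ((μ (cyl S (extS a0 S c))).toReal)
        + (μ (cyl S (extS a0 S c))).toReal *
            ∑ b, Real.negMulLog (qmat P d (c ⟨m, hmem⟩) b) := by
    intro c
    rw [Finset.mul_sum]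
    have : ∀ b : A,
        Real.negMulLog ((μ (cyl S (extS a0 S c))).toReal * qmat P d (c ⟨m, hmem⟩) b)
        = qmat P d (c ⟨m, hmem⟩) b * Real.negMulLog ((μ (cyl S (extS a0 S c))).toReal)
          + (μ (cyl S (extS a0 S c))).toReal * Real.negMulLog (qmat P d (c ⟨m, hmem⟩) b) :=
      fun b => Real.negMulLog_mul _ _
    rw [Finset.sum_congr rfl (fun b _ => this b), Finset.sum_add_distrib, ← Finset.sum_mul,
      qmat_row hProw d, one_mul]
  rw [Finset.sum_congr rfl (fun c _ => expand c), Finset.sum_add_distrib]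
  congr 1
  exact marginal hM hp0 S hS a0 (fun a => ∑ b, Real.negMulLog (qmat P d a b))

lemma negMulLog_le_one {x : ℝ} (h0 : 0 ≤ x) (_h1 : x ≤ 1) : Real.negMulLog x ≤ 1 := by
  rcases eq_or_lt_of_le h0 with h | h
  · rw [← h, Real.negMulLog_zero]; norm_num
  · have hlog : Real.log x⁻¹ ≤ x⁻¹ - 1 := Real.log_le_sub_one_of_pos (by positivity)
    have hrw : Real.negMulLog x = x * Real.log x⁻¹ := by
      rw [Real.negMulLog, Real.log_inv]; ring
    rw [hrw]
    calc x * Real.log x⁻¹ ≤ x * (x⁻¹ - 1) := mul_le_mul_of_nonneg_left hlog h0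
      _ = 1 - x := by field_simp
      _ ≤ 1 := by linarith

lemma sum_powerset_max' (c : ℝ) (φ : ℕ → ℝ) (n : ℕ) :
    ∑ S ∈ (Finset.range n).powerset, (if h : S.Nonempty then φ (S.max' h) else c)
      = c + ∑ m ∈ Finset.range n, (2 : ℝ)^m * φ m := by
  induction n generalizing φ with
  | zero => simp
  | succ n ih =>
    rw [Finset.range_add_one, Finset.sum_powerset_insert Finset.notMem_range_self, ih φ]
    have hterm : ∀ S ∈ (Finset.range n).powerset,
        (if h : (insert n S).Nonempty then φ ((insert n S).max' h) else c) = φ n := by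
      intro S hSm
      rw [dif_pos (Finset.insert_nonempty n S)]
      congr 1
      apply le_antisymm
      · apply Finset.max'_le
        intro y hy
        rcases Finset.mem_insert.1 hy with rfl | hy
        · exact le_rfl
        · exact le_of_lt (Finset.mem_range.1 ((Finset.mem_powerset.1 hSm) hy))
      · exact Finset.le_max' _ n (Finset.mem_insert_self n S)
    rw [Finset.sum_congr rfl hterm, Finset.sum_const, Finset.card_powerset, Finset.card_range,
      Finset.sum_insert Finset.notMem_range_self, nsmul_eq_mul]
    push_cast
    ring

end Aux

/-- For a 1-step Markov shift with stochastic matrix `P`, stationary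
vector `p`, time-0 generating partition `α` (here `α x = x 0`) and coefficients
`c_S^n = 2^{-n}`, one has
`Asc_μ(X,α,T) = (1/2) Σ_{i=1}^∞ 2^{-i} H_μ(α | α_i)`,
where `H_μ(α | α_i) = H_μ(α ∨ α_i) − H_μ(α_i)`. -/
theorem markov_ascMu_series {A : Type*} [Fintype A] [DecidableEq A]
    [MeasurableSpace A] [MeasurableSingletonClass A]
    (P : A → A → ℝ) (p : A → ℝ)
    (hP0 : ∀ a b, 0 ≤ P a b) (hProw : ∀ a, ∑ b, P a b = 1)
    (hp0 : ∀ a, 0 ≤ p a) (hp1 : ∑ a, p a = 1)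
    (hfix : ∀ b, ∑ a, p a * P a b = p b)
    (μ : Measure (ℤ → A)) [IsProbabilityMeasure μ]
    (T : (ℤ → A) → (ℤ → A)) (hTdef : ∀ x i, T x i = x (i + 1))
    (hTpres : MeasurePreserving T μ μ)
    (hMarkov : ∀ (i : ℤ) (k : ℕ) (w : ℕ → A),
      μ {x | ∀ j : ℕ, j ≤ k → x (i + j) = w j} =
        ENNReal.ofReal (p (w 0) * ∏ j ∈ Finset.range k, P (w j) (w (j + 1)))) :
    Tendsto (fun n : ℕ =>
        (1 / n : ℝ) * (2 ^ n : ℝ)⁻¹ *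
          ∑ S ∈ (Finset.range n).powerset, HS μ T (fun x => x 0) S)
      atTop
      (𝓝 ((1 / 2) * ∑' i : ℕ, (2 ^ (i + 1) : ℝ)⁻¹ *
        (HS μ T (fun x => x 0) {0, i + 1} - HS μ T (fun x => x 0) {i + 1}))) := by
  have hMm : MarkovHyp P p μ := hMarkov
  have hAne : Nonempty A := by
    by_contra h
    rw [not_nonempty_iff] at h
    rw [Finset.univ_eq_empty, Finset.sum_empty] at hp1
    exact absurd hp1 (by norm_num)
  obtain ⟨a0⟩ := hAne
  set F : Finset ℕ → ℝ := HS μ T (fun x => x 0) with hFdef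
  set GI : ℕ → ℝ := fun d => ∑ a, p a * ∑ b, Real.negMulLog (qmat P d a b) with hGIdef
  set H1 : ℝ := ∑ a, Real.negMulLog (p a) with hH1def
  have hF0 : F ∅ = 0 := HS_empty_s17 hTdef a0
  have hFs : ∀ j : ℕ, F {j} = H1 := fun j => HS_single_s17 hMm hp0 hTdef a0 j
  have hFins : ∀ (S : Finset ℕ) (hS : S.Nonempty) (d : ℕ), 1 ≤ d →
      F (insert (S.max' hS + d) S) = F S + GI d :=
    fun S hS d hd => HS_insert hMm hp0 hP0 hProw hTdef a0 S hS d hd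
  have hGg : ∀ i : ℕ, F {0, i+1} - F {i+1} = GI (i+1) := by
    intro i
    have hpair : ({0, i+1} : Finset ℕ) = insert (i+1) {0} := Finset.pair_comm 0 (i+1)
    have hs0 : ({0} : Finset ℕ).Nonempty := ⟨0, Finset.mem_singleton_self 0⟩
    have h2 := hFins {0} hs0 (i+1) (by omega)
    rw [Finset.max'_singleton, zero_add] at h2
    rw [hpair, h2, hFs 0, hFs (i+1)]
    ring
  -- the basic recursion for the powerset sums
  have hrec : ∀ n : ℕ, ∑ S ∈ (Finset.range (n+1)).powerset, F S
      = 2 * (∑ S ∈ (Finset.range n).powerset, F S) + H1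
        + ∑ m ∈ Finset.range n, (2:ℝ)^m * GI (n - m) := by
    intro n
    rw [Finset.range_add_one, Finset.sum_powerset_insert Finset.notMem_range_self]
    have hins : ∀ S ∈ (Finset.range n).powerset,
        F (insert n S) = (if h : S.Nonempty then GI (n - S.max' h) else H1) + F S := by
      intro S hSm
      by_cases h : S.Nonempty
      · have hmlt : S.max' h < n :=
          Finset.mem_range.1 ((Finset.mem_powerset.1 hSm) (S.max'_mem h))
        have h3 := hFins S h (n - S.max' h) (by omega)
        rw [show S.max' h + (n - S.max' h) = n from by omega] at h3
        rw [dif_pos h, h3]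
        ring
      · have hSe : S = ∅ := Finset.not_nonempty_iff_eq_empty.1 h
        subst hSe
        have hone : insert n (∅ : Finset ℕ) = {n} := rfl
        rw [dif_neg h, hF0, hone, hFs n]
        ring
    rw [Finset.sum_congr rfl hins, Finset.sum_add_distrib,
      sum_powerset_max' H1 (fun mm => GI (n - mm)) n]
    ring
  set u : ℕ → ℝ := fun k => ((2:ℝ)^(k+1))⁻¹ * H1
      + ∑ i ∈ Finset.range k, ((2:ℝ)^(i+2))⁻¹ * GI (i+1) with hudef
  have hsum : ∀ n : ℕ, ((2:ℝ)^n)⁻¹ * (∑ S ∈ (Finset.range n).powerset, F S)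
      = ∑ k ∈ Finset.range n, u k := by
    intro n
    induction n with
    | zero => simp [hF0]
    | succ n ih =>
      rw [Finset.sum_range_succ, ← ih, hrec n]
      have hsplit : ∑ m ∈ Finset.range n, ((2:ℝ)^(n+1))⁻¹ * ((2:ℝ)^m * GI (n - m))
          = ∑ i ∈ Finset.range n, ((2:ℝ)^(i+2))⁻¹ * GI (i+1) := by
        rw [← Finset.sum_range_reflect (fun i => ((2:ℝ)^(i+2))⁻¹ * GI (i+1)) n]
        refine Finset.sum_congr rfl fun j hj => ?_
        have hjn : j < n := Finset.mem_range.1 hj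
        have e1 : n - 1 - j + 1 = n - j := by omega
        have e3 : ((2:ℝ)^(n+1))⁻¹ * 2^j = ((2:ℝ)^(n-1-j+2))⁻¹ := by
          have e2 : (2:ℝ)^(n+1) = 2^(n-1-j+2) * 2^j := by
            rw [← pow_add]; congr 1; omega
          rw [e2, mul_inv]
          have hne : ((2:ℝ)^j) ≠ 0 := by positivity
          field_simp
        rw [e1, ← e3]
        ring
      have h2 : ((2:ℝ)^n)⁻¹ = ((2:ℝ)^(n+1))⁻¹ * 2 := by
        rw [pow_succ, mul_inv, mul_assoc, inv_mul_cancel₀ (two_ne_zero), mul_one]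
      rw [show (u n) = ((2:ℝ)^(n+1))⁻¹ * H1
          + ∑ i ∈ Finset.range n, ((2:ℝ)^(i+2))⁻¹ * GI (i+1) from rfl, ← hsplit,
        ← Finset.mul_sum, h2]
      generalize (∑ S ∈ (Finset.range n).powerset, F S) = X
      ring
  -- bounds on GI and summability
  have hGI0 : ∀ d, 0 ≤ GI d := fun d =>
    Finset.sum_nonneg fun a _ => mul_nonneg (hp0 a) (Finset.sum_nonneg fun b _ =>
      Real.negMulLog_nonneg (qmat_nonneg hP0 d a b) (qmat_le_one hP0 hProw d a b))
  have hGIle : ∀ d, GI d ≤ (Fintype.card A : ℝ) := by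
    intro d
    calc GI d ≤ ∑ a, p a * (Fintype.card A : ℝ) := by
          refine Finset.sum_le_sum fun a _ => mul_le_mul_of_nonneg_left ?_ (hp0 a)
          calc ∑ b, Real.negMulLog (qmat P d a b) ≤ ∑ _b : A, (1:ℝ) :=
                Finset.sum_le_sum fun b _ => negMulLog_le_one (qmat_nonneg hP0 d a b)
                  (qmat_le_one hP0 hProw d a b)
            _ = (Fintype.card A : ℝ) := by simp
      _ = (Fintype.card A : ℝ) := by rw [← Finset.sum_mul, hp1, one_mul]
  have hsummable : Summable (fun i : ℕ => ((2:ℝ)^(i+2))⁻¹ * GI (i+1)) := by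
    refine Summable.of_nonneg_of_le (fun i => mul_nonneg (by positivity) (hGI0 _))
      (fun i => ?_)
      (Summable.mul_left (Fintype.card A : ℝ)
        (summable_geometric_of_lt_one (by norm_num) (by norm_num : (2⁻¹:ℝ) < 1)))
    calc ((2:ℝ)^(i+2))⁻¹ * GI (i+1) ≤ ((2:ℝ)^i)⁻¹ * (Fintype.card A : ℝ) := by
          refine mul_le_mul ?_ (hGIle _) (hGI0 _) (by positivity)
          exact inv_anti₀ (by positivity)
            (pow_le_pow_right₀ (by norm_num) (by omega))
      _ = (Fintype.card A : ℝ) * (2⁻¹:ℝ)^i := by rw [inv_pow]; ring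
  set L : ℝ := ∑' i : ℕ, ((2:ℝ)^(i+2))⁻¹ * GI (i+1) with hLdef
  have hu0 : Tendsto (fun k : ℕ => ((2:ℝ)^(k+1))⁻¹ * H1) atTop (𝓝 0) := by
    have h1 : (fun k : ℕ => ((2:ℝ)^(k+1))⁻¹ * H1) = fun k => (2⁻¹:ℝ)^k * (2⁻¹ * H1) := by
      funext k
      rw [← inv_pow, pow_succ]
      ring
    rw [h1]
    have h2 := (tendsto_pow_atTop_nhds_zero_of_lt_one
      (by norm_num : (0:ℝ) ≤ 2⁻¹) (by norm_num : (2⁻¹:ℝ) < 1)).mul_const (2⁻¹ * H1)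
    simpa using h2
  have hut : Tendsto u atTop (𝓝 L) := by
    have hps := hsummable.hasSum.tendsto_sum_nat
    have h3 := hu0.add hps
    rw [zero_add] at h3
    exact h3
  have hces := hut.cesaro
  have hfun : (fun n : ℕ =>
        (1 / n : ℝ) * ((2:ℝ)^n)⁻¹ * ∑ S ∈ (Finset.range n).powerset, F S)
      = fun n : ℕ => ((n:ℝ))⁻¹ * ∑ k ∈ Finset.range n, u k := by
    funext n
    rw [← hsum n, one_div]
    ring
  have hLval : (1/2 : ℝ) * ∑' i : ℕ, ((2:ℝ)^(i+1))⁻¹ * (F {0, i+1} - F {i+1}) = L := by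
    rw [← tsum_mul_left]
    apply tsum_congr
    intro i
    rw [hGg i, show ((2:ℝ)^(i+2)) = 2 * 2^(i+1) from by rw [pow_succ]; ring, mul_inv]
    ring
  rw [hfun, hLval]
  exact hces
end
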